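/- arXiv:2502.07769 — 14 statements merged into one kernel-verified Lean document; each statement's English description precedes it below -/
import Mathlib

section
/- Let G be a finite simple graph. Then G has a matching cut if and only if there exists an assignment s : V(G) → Bool which is not constant and such that for every vertex i and every pair of distinct neighbours j, k of i, the three Boolean values ¬s(i), s(j), s(k) are not all equal. -/
/-- A matching cut of a simple graph `G`: a partition of the vertex set into two
nonempty sets `A` and `B` such that every vertex has at most one neighbour
on the opposite side of the partition. -/
def HasMatchingCut {V : Type*} (G : SimpleGraph V) : Prop :=
  ∃ A B : Set V, A.Nonempty ∧ B.Nonempty ∧ Disjoint A B ∧ A ∪ B = Set.univ ∧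
    (∀ v ∈ A, {w | w ∈ B ∧ G.Adj v w}.Subsingleton) ∧
    (∀ v ∈ B, {w | w ∈ A ∧ G.Adj v w}.Subsingleton)

/-- A finite simple graph `G` has a matching cut iff there is a non-constant
Boolean assignment `s` on the vertices such that for every vertex `i` and every
pair of distinct neighbours `j`, `k` of `i`, the values `¬s i`, `s j`, `s k`
are not all equal. -/
theorem stmt0 {V : Type*} [Fintype V] (G : SimpleGraph V) :
    HasMatchingCut G ↔
      ∃ s : V → Bool, (∃ u v : V, s u ≠ s v) ∧
        ∀ i j k : V, G.Adj i j → G.Adj i k → j ≠ k →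
          ¬ ((!s i) = s j ∧ s j = s k) := by
  constructor
  · rintro ⟨A, B, ⟨a, ha⟩, ⟨b, hb⟩, hdisj, huniv, hA, hB⟩
    classical
    refine ⟨fun v => decide (v ∈ A), ⟨a, b, ?_⟩, ?_⟩
    · have hbA : b ∉ A := fun h => hdisj.ne_of_mem h hb rfl
      simp [ha, hbA]
    · intro i j k hij hik hjk ⟨h1, h2⟩
      simp only at h1 h2
      have memB : ∀ x : V, x ∉ A → x ∈ B := by
        intro x hx
        have := huniv ▸ Set.mem_univ x
        rcases this with h | h
        · exact absurd h hx
        · exact h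
      by_cases hi : i ∈ A
      · have hj' : decide (j ∈ A) = false := by simpa [hi] using h1.symm
        have hk' : decide (k ∈ A) = false := h2.symm.trans hj'
        have hj : j ∈ B := memB j (by simpa using hj')
        have hk : k ∈ B := memB k (by simpa using hk')
        exact hjk (hA i hi ⟨hj, hij⟩ ⟨hk, hik⟩)
      · have hiB : i ∈ B := memB i hi
        have hj' : decide (j ∈ A) = true := by simpa [hi] using h1.symm
        have hk' : decide (k ∈ A) = true := h2.symm.trans hj'
        exact hjk (hB i hiB ⟨by simpa using hj', hij⟩ ⟨by simpa using hk', hik⟩)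
  · rintro ⟨s, ⟨u, v, huv⟩, hs⟩
    have opp : ∀ b : Bool, (∃ x, s x = b) := by
      intro b
      rcases hu : s u with _ | _ <;> rcases hv : s v with _ | _ <;> cases b
      · exact ⟨u, hu⟩
      · exact absurd (hu.trans hv.symm) huv
      · exact ⟨u, hu⟩
      · exact ⟨v, hv⟩
      · exact ⟨v, hv⟩
      · exact ⟨u, hu⟩
      · exact absurd (hu.trans hv.symm) huv
      · exact ⟨u, hu⟩
    refine ⟨{x | s x = true}, {x | s x = false}, opp true, opp false, ?_, ?_, ?_, ?_⟩
    · rw [Set.disjoint_left]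
      intro x hx hx'
      simp only [Set.mem_setOf_eq] at hx hx'
      rw [hx] at hx'
      exact Bool.noConfusion hx'
    · ext x
      simp only [Set.mem_union, Set.mem_setOf_eq, Set.mem_univ, iff_true]
      cases h : s x <;> simp
    · intro i hi j hj k hk
      by_contra hjk
      obtain ⟨hjf, hja⟩ := hj
      obtain ⟨hkf, hka⟩ := hk
      simp only [Set.mem_setOf_eq] at hi hjf hkf
      exact hs i j k hja hka hjk ⟨by rw [hi, hjf]; rfl, by rw [hjf, hkf]⟩
    · intro i hi j hj k hk
      by_contra hjk
      obtain ⟨hjf, hja⟩ := hj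
      obtain ⟨hkf, hka⟩ := hk
      simp only [Set.mem_setOf_eq] at hi hjf hkf
      exact hs i j k hja hka hjk ⟨by rw [hi, hjf]; rfl, by rw [hjf, hkf]⟩
end

section
/- Let d ≥ 1 be an integer and let m be a multigraph on a finite vertex set V, and define the multigraph m' on V by m'(u,v) = min(m(u,v), d + 1). Then m has a multigraph d-cut if and only if m' has a multigraph d-cut. -/
/-- A multigraph on a vertex set `V` is a symmetric multiplicity function
`m : V → V → ℕ` with no loops. -/
def IsMultigraph {V : Type*} (m : V → V → ℕ) : Prop :=
  (∀ u v, m u v = m v u) ∧ (∀ v, m v v = 0)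

/-- `(A, B)` is a multigraph `d`-cut of the multigraph `m`: a partition of the
vertex set into two nonempty parts such that every vertex has at most `d`
edges (counted with multiplicity) going to the other side. -/
def IsMultigraphDCut {V : Type*} [Fintype V] [DecidableEq V]
    (m : V → V → ℕ) (d : ℕ) (A B : Finset V) : Prop :=
  A.Nonempty ∧ B.Nonempty ∧ Disjoint A B ∧ A ∪ B = Finset.univ ∧
    (∀ a ∈ A, ∑ b ∈ B, m a b ≤ d) ∧ (∀ b ∈ B, ∑ a ∈ A, m a b ≤ d)

/-- The multigraph `m` has a `d`-cut. -/
def HasMultigraphDCut {V : Type*} [Fintype V] [DecidableEq V]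
    (m : V → V → ℕ) (d : ℕ) : Prop :=
  ∃ A B : Finset V, IsMultigraphDCut m d A B

lemma cap_sum_iff {V : Type*} (d : ℕ) (S : Finset V) (f : V → ℕ) :
    (∑ x ∈ S, f x ≤ d) ↔ (∑ x ∈ S, min (f x) (d + 1) ≤ d) := by
  constructor
  · intro h
    have : ∑ x ∈ S, min (f x) (d + 1) = ∑ x ∈ S, f x := by
      refine Finset.sum_congr rfl fun x hx => ?_
      have hx' : f x ≤ d := le_trans (Finset.single_le_sum (fun _ _ => Nat.zero_le _) hx) h
      exact min_eq_left (by omega)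
    omega
  · intro h
    have : ∑ x ∈ S, min (f x) (d + 1) = ∑ x ∈ S, f x := by
      refine Finset.sum_congr rfl fun x hx => ?_
      have hx' : min (f x) (d + 1) ≤ d :=
        le_trans (Finset.single_le_sum (f := fun x => min (f x) (d + 1))
          (fun _ _ => Nat.zero_le _) hx) h
      omega
    omega

/-- Capping all multiplicities of a multigraph at `d + 1` does not change
whether it has a multigraph `d`-cut. -/
theorem stmt2 {V : Type*} [Fintype V] [DecidableEq V]
    (d : ℕ) (hd : 1 ≤ d) (m : V → V → ℕ) (hm : IsMultigraph m) :
    HasMultigraphDCut m d ↔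
      HasMultigraphDCut (fun u v => min (m u v) (d + 1)) d := by
  constructor <;> rintro ⟨A, B, h1, h2, h3, h4, h5, h6⟩ <;>
    refine ⟨A, B, h1, h2, h3, h4, fun a ha => ?_, fun b hb => ?_⟩
  · exact (cap_sum_iff d B (m a)).mp (h5 a ha)
  · exact (cap_sum_iff d A (fun x => m x b)).mp (h6 b hb)
  · exact (cap_sum_iff d B (m a)).mpr (h5 a ha)
  · exact (cap_sum_iff d A (fun x => m x b)).mpr (h6 b hb)
end

section
/- Let d ≥ 1 be an integer and let m be a multigraph on a finite vertex set V all of whose multiplicities lie in {0, 1, 2}. Define the multigraph m' on V by m'(u,v) = d if m(u,v) = 1, m'(u,v) = d + 1 if m(u,v) = 2, and m'(u,v) = 0 if m(u,v) = 0. Then m has a multigraph matching cut if and only if m' has a multigraph d-cut. -/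
lemma key_sum_iff {V : Type*} (d : ℕ) (hd : 1 ≤ d) (B : Finset V) (f : V → ℕ)
    (hf : ∀ b, f b ≤ 2) :
    ∑ b ∈ B, f b ≤ 1 ↔
      ∑ b ∈ B, (if f b = 0 then 0 else if f b = 1 then d else d + 1) ≤ d := by
  constructor
  · intro h
    calc ∑ b ∈ B, (if f b = 0 then 0 else if f b = 1 then d else d + 1)
        ≤ ∑ b ∈ B, d * f b := by
          apply Finset.sum_le_sum
          intro b hb
          have h1 : f b ≤ 1 :=
            le_trans (Finset.single_le_sum (f := f) (fun _ _ => Nat.zero_le _) hb) h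
          interval_cases (f b) <;> simp
      _ = d * ∑ b ∈ B, f b := (Finset.mul_sum _ _ _).symm
      _ ≤ d * 1 := Nat.mul_le_mul_left d h
      _ = d := mul_one d
  · intro h
    by_contra hc
    push_neg at hc
    by_cases he : ∃ b ∈ B, f b = 2
    · obtain ⟨b, hb, hb2⟩ := he
      have hle : d + 1 ≤ ∑ b ∈ B, (if f b = 0 then 0 else if f b = 1 then d else d + 1) := by
        calc d + 1 = (if f b = 0 then 0 else if f b = 1 then d else d + 1) := by simp [hb2]
          _ ≤ _ := Finset.single_le_sum (f := fun b => if f b = 0 then 0 else if f b = 1 then d else d + 1) (fun _ _ => Nat.zero_le _) hb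
      omega
    · push_neg at he
      have hle : ∀ b ∈ B, f b ≤ 1 := fun b hb => by
        have := hf b; have := he b hb; omega
      have heq : ∑ b ∈ B, (if f b = 0 then 0 else if f b = 1 then d else d + 1)
          = d * ∑ b ∈ B, f b := by
        rw [Finset.mul_sum]
        refine Finset.sum_congr rfl fun b hb => ?_
        have h1 := hle b hb
        interval_cases (f b) <;> simp
      rw [heq] at h
      have := Nat.mul_le_mul_left d hc
      omega

/-- Let `m` be a multigraph with all multiplicities in `{0, 1, 2}`, and let
`m'` be obtained by changing every multiplicity `1` into `d` and every
multiplicity `2` into `d + 1`. Then `m` has a multigraph matching cut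
(that is, a `1`-cut) if and only if `m'` has a multigraph `d`-cut. -/
theorem stmt3 {V : Type*} [Fintype V] [DecidableEq V]
    (d : ℕ) (hd : 1 ≤ d) (m : V → V → ℕ) (hm : IsMultigraph m)
    (h2 : ∀ u v, m u v ≤ 2) :
    HasMultigraphDCut m 1 ↔
      HasMultigraphDCut
        (fun u v => if m u v = 0 then 0 else if m u v = 1 then d else d + 1)
        d := by
  constructor
  · rintro ⟨A, B, hA, hB, hdis, huniv, hAcut, hBcut⟩
    exact ⟨A, B, hA, hB, hdis, huniv,
      fun a ha => (key_sum_iff d hd B (m a) (h2 a)).mp (hAcut a ha),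
      fun b hb => (key_sum_iff d hd A (fun a => m a b) (fun a => h2 a b)).mp (hBcut b hb)⟩
  · rintro ⟨A, B, hA, hB, hdis, huniv, hAcut, hBcut⟩
    exact ⟨A, B, hA, hB, hdis, huniv,
      fun a ha => (key_sum_iff d hd B (m a) (h2 a)).mpr (hAcut a ha),
      fun b hb => (key_sum_iff d hd A (fun a => m a b) (fun a => h2 a b)).mpr (hBcut b hb)⟩
end

section
/- Let m be a multigraph on a finite vertex set V all of whose multiplicities lie in {0, 1, 2}, and let D be the set of unordered pairs {u,v} with m(u,v) = 2. Let G' be the finite simple graph on vertex set V ⊕ D in which two vertices u, v ∈ V are adjacent iff m(u,v) ≥ 1, each element t = {u,v} ∈ D is adjacent exactly to u and v, and no two elements of D are adjacent. Then m has a multigraph matching cut if and only if G' has a matching cut. -/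
/-- `(A, B)` is a multigraph matching cut of the multigraph `m`: a partition of
the vertex set into two nonempty parts such that every vertex has at most one
edge (counted with multiplicity) going to the other side. -/
def IsMultigraphMatchingCut {V : Type*} [Fintype V] [DecidableEq V]
    (m : V → V → ℕ) (A B : Finset V) : Prop :=
  A.Nonempty ∧ B.Nonempty ∧ Disjoint A B ∧ A ∪ B = Finset.univ ∧
    (∀ a ∈ A, ∑ b ∈ B, m a b ≤ 1) ∧ (∀ b ∈ B, ∑ a ∈ A, m a b ≤ 1)

/-- The set `D` of unordered pairs `{u, v}` with `m u v = 2`. -/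
def DoublePairs {V : Type*} (m : V → V → ℕ) : Type _ :=
  {p : Sym2 V // ∃ u v : V, p = s(u, v) ∧ m u v = 2}

/-- The simple graph on `V ⊕ D` obtained from the multigraph `m` by replacing
every double edge by a triangle: `u, v ∈ V` are adjacent iff `m u v ≥ 1`, and
each pair `t = {u, v} ∈ D` is adjacent exactly to `u` and `v`. -/
def Triangulate {V : Type*} (m : V → V → ℕ) (hsymm : ∀ u v, m u v = m v u) :
    SimpleGraph (V ⊕ DoublePairs m) where
  Adj x y :=
    match x, y with
    | Sum.inl u, Sum.inl v => u ≠ v ∧ 1 ≤ m u v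
    | Sum.inl u, Sum.inr t => u ∈ t.val
    | Sum.inr t, Sum.inl u => u ∈ t.val
    | Sum.inr _, Sum.inr _ => False
  symm := by
    constructor
    rintro (u | t) (v | s) h
    · exact ⟨Ne.symm h.1, by rw [hsymm]; exact h.2⟩
    · exact h
    · exact h
    · exact h
  loopless := by
    constructor
    rintro (u | t) h
    · exact h.1 rfl
    · exact h

set_option linter.unusedSectionVars false
section Aux
variable {V : Type*}

lemma tri_adj_ll {m : V → V → ℕ} (hs : ∀ u v, m u v = m v u) (u v : V) :
    (Triangulate m hs).Adj (Sum.inl u) (Sum.inl v) ↔ u ≠ v ∧ 1 ≤ m u v := Iff.rfl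

lemma tri_adj_lr {m : V → V → ℕ} (hs : ∀ u v, m u v = m v u) (u : V) (t : DoublePairs m) :
    (Triangulate m hs).Adj (Sum.inl u) (Sum.inr t) ↔ u ∈ t.val := Iff.rfl

lemma tri_adj_rl {m : V → V → ℕ} (hs : ∀ u v, m u v = m v u) (u : V) (t : DoublePairs m) :
    (Triangulate m hs).Adj (Sum.inr t) (Sum.inl u) ↔ u ∈ t.val := Iff.rfl

lemma tri_adj_rr {m : V → V → ℕ} (hs : ∀ u v, m u v = m v u) (t s : DoublePairs m) :
    ¬ (Triangulate m hs).Adj (Sum.inr t) (Sum.inr s) := fun h => h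

lemma sum_ge_two_cases [DecidableEq V] {B : Finset V} {f : V → ℕ}
    (h : 2 ≤ ∑ b ∈ B, f b) :
    (∃ b ∈ B, 2 ≤ f b) ∨ ∃ b₁ ∈ B, ∃ b₂ ∈ B, b₁ ≠ b₂ ∧ 1 ≤ f b₁ ∧ 1 ≤ f b₂ := by
  by_contra hc
  push_neg at hc
  obtain ⟨h1, h2⟩ := hc
  by_cases hex : ∃ b₀ ∈ B, 1 ≤ f b₀
  · obtain ⟨b₀, hb₀, hf₀⟩ := hex
    have hsum : ∑ b ∈ B, f b = f b₀ := by
      refine Finset.sum_eq_single_of_mem b₀ hb₀ ?_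
      intro b hb hne
      by_contra hfb
      have h1b : 1 ≤ f b := Nat.one_le_iff_ne_zero.mpr hfb
      have := h2 b hb b₀ hb₀ hne h1b; omega
    have := h1 b₀ hb₀
    omega
  · push_neg at hex
    have hsum : ∑ b ∈ B, f b = 0 := by
      refine Finset.sum_eq_zero fun b hb => ?_
      have := hex b hb; omega
    omega

/-- the side of the triangulated graph determined by a vertex set `A`. -/
def mySide (m : V → V → ℕ) (A : Finset V) : Set (V ⊕ DoublePairs m) :=
  {x | Sum.elim (fun v => v ∈ A) (fun t : DoublePairs m => ∀ u ∈ t.val, u ∈ A) x}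

lemma mem_mySide_inl {m : V → V → ℕ} {A : Finset V} {v : V} :
    Sum.inl v ∈ mySide m A ↔ v ∈ A := Iff.rfl

lemma mem_mySide_inr {m : V → V → ℕ} {A : Finset V} {t : DoublePairs m} :
    Sum.inr t ∈ mySide m A ↔ ∀ u ∈ t.val, u ∈ A := Iff.rfl

lemma same_side [Fintype V] [DecidableEq V] {m : V → V → ℕ} (hm : IsMultigraph m) {A B : Finset V}
    (hcov : A ∪ B = Finset.univ)
    (hsA : ∀ a ∈ A, ∑ b ∈ B, m a b ≤ 1) (t : DoublePairs m) :
    (∀ u ∈ t.val, u ∈ A) ∨ (∀ u ∈ t.val, u ∈ B) := by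
  obtain ⟨u, v, hval, htwo⟩ := t.2
  have hu : u ∈ A ∨ u ∈ B := by
    have := Finset.mem_univ u; rw [← hcov, Finset.mem_union] at this; exact this
  have hv : v ∈ A ∨ v ∈ B := by
    have := Finset.mem_univ v; rw [← hcov, Finset.mem_union] at this; exact this
  have hmem : ∀ w, w ∈ t.val → w = u ∨ w = v := by
    intro w hw; rw [hval, Sym2.mem_iff] at hw; exact hw
  have hnAB : ¬ (u ∈ A ∧ v ∈ B) := by
    rintro ⟨huA, hvB⟩
    have : m u v ≤ ∑ b ∈ B, m u b :=
      Finset.single_le_sum (fun b _ => Nat.zero_le _) hvB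
    have := hsA u huA; omega
  have hnBA : ¬ (v ∈ A ∧ u ∈ B) := by
    rintro ⟨hvA, huB⟩
    have : m v u ≤ ∑ b ∈ B, m v b :=
      Finset.single_le_sum (fun b _ => Nat.zero_le _) huB
    have hsym := hm.1 u v
    have := hsA v hvA; omega
  rcases hu with huA | huB <;> rcases hv with hvA | hvB
  · left; intro w hw; rcases hmem w hw with rfl | rfl <;> assumption
  · exact absurd ⟨huA, hvB⟩ hnAB
  · exact absurd ⟨hvA, huB⟩ hnBA
  · right; intro w hw; rcases hmem w hw with rfl | rfl <;> assumption

lemma fwd_aux [Fintype V] [DecidableEq V] {m : V → V → ℕ} (hm : IsMultigraph m) {A B : Finset V}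
    (hdisj : Disjoint A B)
    (hsum : ∀ a ∈ A, ∑ b ∈ B, m a b ≤ 1) :
    ∀ v ∈ mySide m A,
      {w | w ∈ mySide m B ∧ (Triangulate m hm.1).Adj v w}.Subsingleton := by
  rintro (u | t) hv
  · rintro (b₁ | t₁) ⟨hb₁, hadj₁⟩ (b₂ | t₂) ⟨hb₂, hadj₂⟩
    · rw [mem_mySide_inl] at hb₁ hb₂
      rw [tri_adj_ll] at hadj₁ hadj₂
      rw [mem_mySide_inl] at hv
      congr 1
      by_contra hne
      have hsub : ({b₁, b₂} : Finset V) ⊆ B := by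
        intro x hx; rcases Finset.mem_insert.mp hx with rfl | hx
        · exact hb₁
        · rw [Finset.mem_singleton] at hx; subst hx; exact hb₂
      have h2le : 2 ≤ ∑ b ∈ B, m u b := by
        calc 2 ≤ m u b₁ + m u b₂ := by have := hadj₁.2; have := hadj₂.2; omega
          _ = ∑ b ∈ ({b₁, b₂} : Finset V), m u b := (Finset.sum_pair hne).symm
          _ ≤ ∑ b ∈ B, m u b :=
            Finset.sum_le_sum_of_subset hsub
      have := hsum u hv; omega
    · rw [mem_mySide_inr] at hb₂
      rw [tri_adj_lr] at hadj₂
      rw [mem_mySide_inl] at hv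
      exact absurd (hb₂ u hadj₂) (fun hB => Finset.disjoint_left.mp hdisj hv hB)
    · rw [mem_mySide_inr] at hb₁
      rw [tri_adj_lr] at hadj₁
      rw [mem_mySide_inl] at hv
      exact absurd (hb₁ u hadj₁) (fun hB => Finset.disjoint_left.mp hdisj hv hB)
    · rw [mem_mySide_inr] at hb₁
      rw [tri_adj_lr] at hadj₁
      rw [mem_mySide_inl] at hv
      exact absurd (hb₁ u hadj₁) (fun hB => Finset.disjoint_left.mp hdisj hv hB)
  · rw [mem_mySide_inr] at hv
    rintro (b | s) ⟨hb, hadj⟩ w₂ hw₂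
    · rw [tri_adj_rl] at hadj
      rw [mem_mySide_inl] at hb
      exact absurd (hv b hadj) (fun hA => Finset.disjoint_left.mp hdisj hA hb)
    · exact absurd hadj (tri_adj_rr hm.1 t s)

lemma back_aux [Fintype V] [DecidableEq V] {m : V → V → ℕ} (hm : IsMultigraph m) (h2 : ∀ u v, m u v ≤ 2)
    {A' B' : Set (V ⊕ DoublePairs m)}
    (hdisj : Disjoint A' B') (hcov : A' ∪ B' = Set.univ)
    (hA' : ∀ v ∈ A', {w | w ∈ B' ∧ (Triangulate m hm.1).Adj v w}.Subsingleton)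
    (hB' : ∀ v ∈ B', {w | w ∈ A' ∧ (Triangulate m hm.1).Adj v w}.Subsingleton)
    {a : V} (ha : Sum.inl a ∈ A') (B : Finset V)
    (hB : ∀ b ∈ B, Sum.inl b ∈ B') :
    ∑ b ∈ B, m a b ≤ 1 := by
  by_contra hge
  push_neg at hge
  have hge2 : 2 ≤ ∑ b ∈ B, m a b := hge
  rcases sum_ge_two_cases hge2 with ⟨b, hbB, hfb⟩ | ⟨b₁, hb₁, b₂, hb₂, hne, hf₁, hf₂⟩
  · -- double edge from a to b
    have hab : m a b = 2 := le_antisymm (h2 a b) hfb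
    have hneab : a ≠ b := by rintro rfl; rw [hm.2] at hab; omega
    set t : DoublePairs m := ⟨s(a, b), a, b, rfl, hab⟩ with ht
    have hat : a ∈ t.val := Sym2.mem_mk_left a b
    have hbt : b ∈ t.val := Sym2.mem_mk_right a b
    have htcov : Sum.inr t ∈ A' ∪ B' := hcov ▸ Set.mem_univ _
    rcases htcov with htA | htB
    · -- t on the A side: inl b has two neighbours in A'
      have m1 : Sum.inl a ∈ {w | w ∈ A' ∧ (Triangulate m hm.1).Adj (Sum.inl b) w} :=
        ⟨ha, ⟨hneab.symm, by rw [hm.1 b a]; omega⟩⟩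
      have m2 : Sum.inr t ∈ {w | w ∈ A' ∧ (Triangulate m hm.1).Adj (Sum.inl b) w} :=
        ⟨htA, hbt⟩
      have := hB' _ (hB b hbB) m1 m2
      simp at this
    · -- t on the B side: inl a has two neighbours in B'
      have m1 : Sum.inl b ∈ {w | w ∈ B' ∧ (Triangulate m hm.1).Adj (Sum.inl a) w} :=
        ⟨hB b hbB, ⟨hneab, by omega⟩⟩
      have m2 : Sum.inr t ∈ {w | w ∈ B' ∧ (Triangulate m hm.1).Adj (Sum.inl a) w} :=
        ⟨htB, hat⟩
      have := hA' _ ha m1 m2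
      simp at this
  · -- two distinct neighbours
    have hne' : a ≠ b₁ := by rintro rfl; rw [hm.2] at hf₁; omega
    have hne'' : a ≠ b₂ := by rintro rfl; rw [hm.2] at hf₂; omega
    have h1 : Sum.inl b₁ ∈ {w | w ∈ B' ∧ (Triangulate m hm.1).Adj (Sum.inl a) w} :=
      ⟨hB b₁ hb₁, ⟨hne', hf₁⟩⟩
    have h2 : Sum.inl b₂ ∈ {w | w ∈ B' ∧ (Triangulate m hm.1).Adj (Sum.inl a) w} :=
      ⟨hB b₂ hb₂, ⟨hne'', hf₂⟩⟩
    have := hA' _ ha h1 h2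
    simp at this
    exact hne this


lemma exists_inl {m : V → V → ℕ} (hm : IsMultigraph m)
    {A' B' : Set (V ⊕ DoublePairs m)} (hne : A'.Nonempty) (hcov : A' ∪ B' = Set.univ)
    (hA' : ∀ v ∈ A', {w | w ∈ B' ∧ (Triangulate m hm.1).Adj v w}.Subsingleton) :
    ∃ v, Sum.inl v ∈ A' := by
  obtain ⟨x, hx⟩ := hne
  match x with
  | Sum.inl v => exact ⟨v, hx⟩
  | Sum.inr t =>
    obtain ⟨u, v, hval, htwo⟩ := t.2
    have huv : u ≠ v := by rintro rfl; rw [hm.2] at htwo; omega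
    have hu : Sum.inl u ∈ A' ∪ B' := hcov ▸ Set.mem_univ _
    have hv : Sum.inl v ∈ A' ∪ B' := hcov ▸ Set.mem_univ _
    rcases hu with h | hu
    · exact ⟨u, h⟩
    rcases hv with h | hv
    · exact ⟨v, h⟩
    exfalso
    have m1 : Sum.inl u ∈ {w | w ∈ B' ∧ (Triangulate m hm.1).Adj (Sum.inr t) w} :=
      ⟨hu, by rw [tri_adj_rl, hval]; exact Sym2.mem_mk_left u v⟩
    have m2 : Sum.inl v ∈ {w | w ∈ B' ∧ (Triangulate m hm.1).Adj (Sum.inr t) w} :=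
      ⟨hv, by rw [tri_adj_rl, hval]; exact Sym2.mem_mk_right u v⟩
    have := hA' _ hx m1 m2
    simp at this
    exact huv this

end Aux

/-- A multigraph with multiplicities in `{0, 1, 2}` has a multigraph matching
cut if and only if the simple graph obtained by replacing every double edge by
a triangle has a matching cut. -/
theorem stmt4 {V : Type*} [Fintype V] [DecidableEq V]
    (m : V → V → ℕ) (hm : IsMultigraph m) (h2 : ∀ u v, m u v ≤ 2) :
    (∃ A B : Finset V, IsMultigraphMatchingCut m A B) ↔
      HasMatchingCut (Triangulate m hm.1) := by
  constructor
  · rintro ⟨A, B, hAne, hBne, hdisj, hcov, hsA, hsB⟩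
    have hsB' : ∀ b ∈ B, ∑ a ∈ A, m b a ≤ 1 := by
      intro b hb
      have heq : ∑ a ∈ A, m b a = ∑ a ∈ A, m a b :=
        Finset.sum_congr rfl fun a _ => hm.1 b a
      rw [heq]; exact hsB b hb
    refine ⟨mySide m A, mySide m B, ?_, ?_, ?_, ?_, ?_, ?_⟩
    · obtain ⟨a, ha⟩ := hAne; exact ⟨Sum.inl a, ha⟩
    · obtain ⟨b, hb⟩ := hBne; exact ⟨Sum.inl b, hb⟩
    · rw [Set.disjoint_left]
      rintro (v | t) hA hB
      · exact Finset.disjoint_left.mp hdisj hA hB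
      · obtain ⟨u, w, hval, htwo⟩ := t.2
        have hu : u ∈ t.val := by rw [hval]; exact Sym2.mem_mk_left u w
        exact Finset.disjoint_left.mp hdisj (hA u hu) (hB u hu)
    · rw [Set.eq_univ_iff_forall]
      rintro (v | t)
      · have := Finset.mem_univ v
        rw [← hcov, Finset.mem_union] at this
        exact this
      · exact same_side hm hcov hsA t
    · exact fwd_aux hm hdisj hsA
    · exact fwd_aux hm hdisj.symm hsB'
  · rintro ⟨A', B', hAne, hBne, hdisj, hcov, hA', hB'⟩
    classical
    refine ⟨Finset.univ.filter (fun v => Sum.inl v ∈ A'),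
      Finset.univ.filter (fun v => Sum.inl v ∈ B'), ?_, ?_, ?_, ?_, ?_, ?_⟩
    · obtain ⟨v, hv⟩ := exists_inl hm hAne hcov hA'
      exact ⟨v, Finset.mem_filter.mpr ⟨Finset.mem_univ v, hv⟩⟩
    · obtain ⟨v, hv⟩ := exists_inl hm hBne (by rw [Set.union_comm]; exact hcov) hB'
      exact ⟨v, Finset.mem_filter.mpr ⟨Finset.mem_univ v, hv⟩⟩
    · rw [Finset.disjoint_left]
      intro v hvA hvB
      rw [Finset.mem_filter] at hvA hvB
      exact Set.disjoint_left.mp hdisj hvA.2 hvB.2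
    · rw [Finset.eq_univ_iff_forall]
      intro v
      have : Sum.inl v ∈ A' ∪ B' := hcov ▸ Set.mem_univ _
      rcases this with h | h
      · exact Finset.mem_union_left _ (Finset.mem_filter.mpr ⟨Finset.mem_univ v, h⟩)
      · exact Finset.mem_union_right _ (Finset.mem_filter.mpr ⟨Finset.mem_univ v, h⟩)
    · intro a ha
      rw [Finset.mem_filter] at ha
      exact back_aux hm h2 hdisj hcov hA' hB' ha.2 _
        (fun b hb => (Finset.mem_filter.mp hb).2)
    · intro b hb
      rw [Finset.mem_filter] at hb
      have heq : ∑ a ∈ Finset.univ.filter (fun v => Sum.inl v ∈ A'), m a b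
          = ∑ a ∈ Finset.univ.filter (fun v => Sum.inl v ∈ A'), m b a :=
        Finset.sum_congr rfl fun a _ => hm.1 a b
      rw [heq]
      exact back_aux hm h2 hdisj.symm (by rw [Set.union_comm]; exact hcov) hB' hA' hb.2 _
        (fun a ha => (Finset.mem_filter.mp ha).2)
end

section
/- Let G be a connected partially reflexive graph on a finite vertex set V and let v be a vertex with exactly one neighbour u, i.e. N(v) = {u} with u ≠ v. Then G has a stable cut if and only if {u} is a stable cut of G, or G − {v} has a stable cut. -/
/-- `S` is an independent set of the partially reflexive graph given by the
symmetric relation `r` (loops allowed): no two vertices of `S` are related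
(in particular every vertex of `S` is irreflexive). -/
def PRIndep {V : Type*} (r : V → V → Prop) (S : Set V) : Prop :=
  ∀ u ∈ S, ∀ v ∈ S, ¬ r u v

/-- `S` is a stable cut of the partially reflexive graph given by `r`: an
independent set whose removal disconnects the graph, i.e. the complement of `S`
splits into two nonempty sets `A`, `B` with no edges between them. -/
def PRStableCut {V : Type*} (r : V → V → Prop) (S : Set V) : Prop :=
  PRIndep r S ∧ ∃ A B : Set V, A.Nonempty ∧ B.Nonempty ∧ Disjoint A B ∧
    A ∪ B = Sᶜ ∧ ∀ a ∈ A, ∀ b ∈ B, ¬ r a b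

/-- The partially reflexive graph given by `r` has a stable cut. -/
def HasPRStableCut {V : Type*} (r : V → V → Prop) : Prop :=
  ∃ S : Set V, PRStableCut r S

/-- Let `G` be a connected partially reflexive graph and let `v` be a vertex
whose only neighbour is `u ≠ v`. Then `G` has a stable cut iff `{u}` is a
stable cut of `G`, or `G − {v}` has a stable cut. -/
theorem stmt5 {V : Type*} [Fintype V] (r : V → V → Prop) (hsymm : Symmetric r)
    (hconn : (SimpleGraph.fromRel r).Connected)
    (v u : V) (huv : u ≠ v) (hadj : r v u)
    (hunique : ∀ w, w ≠ v → r w v → w = u) :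
    HasPRStableCut r ↔
      PRStableCut r {u} ∨
        HasPRStableCut (fun a b : {x : V // x ≠ v} => r a.val b.val) := by
  classical
  have himg : ∀ (T : Set {x : V // x ≠ v}) (x : V) (hx : x ≠ v),
      x ∈ Subtype.val '' T ↔ (⟨x, hx⟩ : {x : V // x ≠ v}) ∈ T := by
    intro T x hx
    constructor
    · rintro ⟨y, hy, he⟩
      exact (Subtype.ext he : y = ⟨x, hx⟩) ▸ hy
    · intro h; exact ⟨⟨x, hx⟩, h, rfl⟩
  have hvimg : ∀ (T : Set {x : V // x ≠ v}), v ∉ Subtype.val '' T := by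
    rintro T ⟨y, _, he⟩; exact y.2 he
  constructor
  · rintro ⟨S, hSind, A, B, ⟨a, haA⟩, ⟨b, hbB⟩, hdisj, hunion, hsep⟩
    have hmem : ∀ x, x ∈ A ∪ B ↔ x ∉ S := by
      intro x; rw [hunion]; exact Iff.rfl
    by_cases hvS : v ∈ S
    · -- v ∈ S : drop v from S, same A, B
      right
      have haS : a ∉ S := (hmem a).1 (Or.inl haA)
      have hbS : b ∉ S := (hmem b).1 (Or.inr hbB)
      refine ⟨Subtype.val ⁻¹' S, ?_, Subtype.val ⁻¹' A, Subtype.val ⁻¹' B,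
        ⟨⟨a, fun h => haS (h ▸ hvS)⟩, haA⟩, ⟨⟨b, fun h => hbS (h ▸ hvS)⟩, hbB⟩, ?_, ?_, ?_⟩
      · intro x hx y hy; exact hSind x.1 hx y.1 hy
      · exact Set.disjoint_left.mpr fun x hx hx' => Set.disjoint_left.mp hdisj hx hx'
      · ext x
        simp only [Set.mem_union, Set.mem_preimage, Set.mem_compl_iff]
        exact hmem x.1
      · intro x hx y hy; exact hsep x.1 hx y.1 hy
    · have hvAB : v ∈ A ∪ B := (hmem v).2 hvS
      by_cases huS : u ∈ S
      · -- {u} is a stable cut, with parts {v} and {v,u}ᶜ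
        left
        have hab : a ≠ b := fun h => Set.disjoint_left.mp hdisj haA (h ▸ hbB)
        have hwit : ∃ w, w ∉ S ∧ w ≠ v := by
          by_cases hav : a = v
          · exact ⟨b, (hmem b).1 (Or.inr hbB), fun h => hab (hav.trans h.symm)⟩
          · exact ⟨a, (hmem a).1 (Or.inl haA), hav⟩
        obtain ⟨w, hwS, hwv⟩ := hwit
        have hwu : w ≠ u := fun h => hwS (h ▸ huS)
        refine ⟨?_, {v}, ({v, u} : Set V)ᶜ, ⟨v, rfl⟩, ⟨w, ?_⟩, ?_, ?_, ?_⟩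
        · intro x hx y hy
          rw [Set.mem_singleton_iff] at hx hy
          rw [hx, hy]
          exact hSind u huS u huS
        · simp only [Set.mem_compl_iff, Set.mem_insert_iff, Set.mem_singleton_iff]
          tauto
        · rw [Set.disjoint_left]
          rintro x rfl hx
          exact hx (Or.inl rfl)
        · ext x
          simp only [Set.mem_union, Set.mem_singleton_iff, Set.mem_compl_iff,
            Set.mem_insert_iff]
          constructor
          · rintro (rfl | h)
            · exact fun h => huv h.symm
            · tauto
          · intro h; tauto
        · rintro x rfl y hy hr
          simp only [Set.mem_compl_iff, Set.mem_insert_iff, Set.mem_singleton_iff] at hy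
          push_neg at hy
          exact hy.2 (hunique y hy.1 (hsymm hr))
      · -- u, v on the same side; remove v
        right
        have huAB : u ∈ A ∪ B := (hmem u).2 huS
        have key : ∀ A B : Set V, Disjoint A B → A ∪ B = Sᶜ →
            (∀ a ∈ A, ∀ b ∈ B, ¬ r a b) → u ∈ A → (∃ b ∈ B, b ≠ v) →
            HasPRStableCut (fun a b : {x : V // x ≠ v} => r a.val b.val) := by
          rintro A B hdisj hunion hsep huA ⟨b, hbB, hbv⟩
          refine ⟨Subtype.val ⁻¹' S, ?_, Subtype.val ⁻¹' A, Subtype.val ⁻¹' B,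
            ⟨⟨u, huv⟩, huA⟩, ⟨⟨b, hbv⟩, hbB⟩, ?_, ?_, ?_⟩
          · intro x hx y hy; exact hSind x.1 hx y.1 hy
          · exact Set.disjoint_left.mpr fun x hx hx' => Set.disjoint_left.mp hdisj hx hx'
          · ext x
            simp only [Set.mem_union, Set.mem_preimage, Set.mem_compl_iff]
            simpa [Set.mem_union, Set.mem_compl_iff] using Set.ext_iff.mp hunion x.1
          · intro x hx y hy; exact hsep x.1 hx y.1 hy
        rcases hvAB with hvA | hvB
        · have huA : u ∈ A := by
            rcases huAB with huA | huB
            · exact huA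
            · exact absurd hadj (hsep v hvA u huB)
          obtain hb' : b ≠ v := fun h => Set.disjoint_left.mp hdisj hvA (h ▸ hbB)
          exact key A B hdisj hunion hsep huA ⟨b, hbB, hb'⟩
        · have huB : u ∈ B := by
            rcases huAB with huA | huB
            · exact absurd (hsymm hadj) (hsep u huA v hvB)
            · exact huB
          obtain ha' : a ≠ v := fun h => Set.disjoint_left.mp hdisj (h ▸ haA) hvB
          refine key B A hdisj.symm (by rw [Set.union_comm]; exact hunion)
            (fun b hb a ha hr => hsep a ha b hb (hsymm hr)) huB ⟨a, haA, ha'⟩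
  · rintro (h | ⟨S', hind', A', B', hA', hB', hd', hu', hsep'⟩)
    · exact ⟨{u}, h⟩
    · have key2 : ∀ A' B' : Set {x : V // x ≠ v}, A'.Nonempty → B'.Nonempty →
          Disjoint A' B' → A' ∪ B' = S'ᶜ →
          (∀ a ∈ A', ∀ b ∈ B', ¬ r a.1 b.1) → (⟨u, huv⟩ : {x : V // x ≠ v}) ∉ B' →
          HasPRStableCut r := by
        rintro A' B' ⟨a', ha'⟩ ⟨b', hb'⟩ hd' hu' hsep' huB'
        refine ⟨Subtype.val '' S', ?_, Subtype.val '' A' ∪ {v}, Subtype.val '' B',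
          ⟨v, Or.inr rfl⟩, ⟨b'.1, ⟨b', hb', rfl⟩⟩, ?_, ?_, ?_⟩
        · rintro x ⟨x', hx', rfl⟩ y ⟨y', hy', rfl⟩
          exact hind' x' hx' y' hy'
        · rw [Set.disjoint_left]
          rintro x (⟨x', hx', rfl⟩ | rfl) hx
          · rw [himg _ _ x'.2] at hx
            exact Set.disjoint_left.mp hd' (by simpa using hx') hx
          · exact hvimg _ hx
        · ext x
          by_cases hxv : x = v
          · subst hxv
            simp only [Set.mem_union, Set.mem_singleton_iff, Set.mem_compl_iff]
            exact ⟨fun _ => hvimg _, fun _ => Or.inl (Or.inr trivial)⟩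
          · simp only [Set.mem_union, Set.mem_singleton_iff, Set.mem_compl_iff,
              himg _ _ hxv]
            have hmem' : (⟨x, hxv⟩ : {x : V // x ≠ v}) ∈ A' ∪ B' ↔
                (⟨x, hxv⟩ : {x : V // x ≠ v}) ∉ S' := by
              rw [hu']; exact Iff.rfl
            constructor
            · rintro ((hA | hx) | hB)
              · exact hmem'.1 (Or.inl hA)
              · exact absurd hx hxv
              · exact hmem'.1 (Or.inr hB)
            · intro h
              rcases hmem'.2 h with h1 | h1
              · exact Or.inl (Or.inl h1)
              · exact Or.inr h1
        · rintro x (⟨x', hx', rfl⟩ | hxv) y ⟨y', hy', rfl⟩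
          · exact hsep' x' hx' y' hy'
          · rw [Set.mem_singleton_iff] at hxv
            rw [hxv]
            intro hr
            have hyu : y'.1 = u := hunique y'.1 y'.2 (hsymm hr)
            have : (⟨u, huv⟩ : {x : V // x ≠ v}) = y' := Subtype.ext hyu.symm
            exact huB' (this ▸ hy')
      by_cases huB : (⟨u, huv⟩ : {x : V // x ≠ v}) ∈ B'
      · exact key2 B' A' hB' hA' hd'.symm (by rw [Set.union_comm]; exact hu')
          (fun b hb a ha hr => hsep' a ha b hb (hsymm hr))
          (fun h => Set.disjoint_left.mp hd' h huB)
      · exact key2 A' B' hA' hB' hd' hu' hsep' huB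
end

section
/- Let G be a connected partially reflexive graph on a finite vertex set V and let v be an irreflexive vertex with exactly two neighbours a ≠ b, i.e. N(v) = {a, b} and r(v,v) fails. Then G has a stable cut if and only if {v} is a stable cut of G, or {a, b} is a stable cut of G, or G − {v} has a stable cut. -/
private lemma stmt6_aux {V : Type*} (r : V → V → Prop)
    (v a b : V) (hab : a ≠ b) (hav : a ≠ v) (hbv : b ≠ v)
    (hadja : r v a) (hadjb : r v b)
    (hnbr : ∀ w, r v w → w = a ∨ w = b)
    (S A B : Set V) (hSind : PRIndep r S) (hB : B.Nonempty)
    (hdisj : Disjoint A B) (hcover : A ∪ B = Sᶜ)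
    (hsep : ∀ x ∈ A, ∀ y ∈ B, ¬ r x y) (hvA : v ∈ A) :
    PRStableCut r {a, b} ∨
      HasPRStableCut (fun x y : {w : V // w ≠ v} => r x.val y.val) := by
  by_cases hA' : ∃ w ∈ A, w ≠ v
  · right
    obtain ⟨w, hwA, hwv⟩ := hA'
    refine ⟨{x | x.val ∈ S}, fun u hu z hz => hSind u.val hu z.val hz,
      {x | x.val ∈ A}, {x | x.val ∈ B}, ⟨⟨w, hwv⟩, hwA⟩, ?_, ?_, ?_,
      fun x hx y hy => hsep x.val hx y.val hy⟩
    · obtain ⟨y, hy⟩ := hB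
      have hyv : y ≠ v := by
        rintro rfl
        exact Set.disjoint_left.mp hdisj hvA hy
      exact ⟨⟨y, hyv⟩, hy⟩
    · rw [Set.disjoint_left]
      intro x hx hx'
      exact Set.disjoint_left.mp hdisj hx hx'
    · ext x
      have h := Set.ext_iff.mp hcover x.val
      simp only [Set.mem_union, Set.mem_compl_iff] at h
      simpa using h
  · push_neg at hA'
    left
    have hvS : v ∉ S := by
      have : v ∈ Sᶜ := hcover ▸ (Set.mem_union_left _ hvA)
      exact this
    have haB : a ∉ B := fun h => hsep v hvA a h hadja
    have hbB : b ∉ B := fun h => hsep v hvA b h hadjb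
    have haS : a ∈ S := by
      by_contra h
      have : a ∈ A ∪ B := hcover.symm ▸ (h : a ∈ Sᶜ)
      rcases this with h' | h'
      · exact hav (hA' a h')
      · exact haB h'
    have hbS : b ∈ S := by
      by_contra h
      have : b ∈ A ∪ B := hcover.symm ▸ (h : b ∈ Sᶜ)
      rcases this with h' | h'
      · exact hbv (hA' b h')
      · exact hbB h'
    refine ⟨?_, {v}, ({v, a, b} : Set V)ᶜ, ⟨v, rfl⟩, ?_, ?_, ?_, ?_⟩
    · intro u hu w hw
      have hu' : u = a ∨ u = b := by simpa using hu
      have hw' : w = a ∨ w = b := by simpa using hw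
      have huS : u ∈ S := by rcases hu' with h | h <;> rw [h] <;> assumption
      have hwS : w ∈ S := by rcases hw' with h | h <;> rw [h] <;> assumption
      exact hSind u huS w hwS
    · obtain ⟨y, hy⟩ := hB
      have hyv : y ≠ v := by
        rintro rfl
        exact Set.disjoint_left.mp hdisj hvA hy
      have hyS : y ∉ S := by
        have : y ∈ Sᶜ := hcover ▸ (Set.mem_union_right _ hy)
        exact this
      have hya : y ≠ a := by rintro rfl; exact hyS haS
      have hyb : y ≠ b := by rintro rfl; exact hyS hbS
      exact ⟨y, by simp [hyv, hya, hyb]⟩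
    · rw [Set.disjoint_left]
      rintro x rfl h
      exact h (by simp)
    · ext x
      have hva : v ≠ a := fun h => hav h.symm
      have hvb : v ≠ b := fun h => hbv h.symm
      simp only [Set.mem_union, Set.mem_singleton_iff, Set.mem_compl_iff,
        Set.mem_insert_iff]
      constructor
      · rintro (rfl | h)
        · push_neg; exact ⟨hva, hvb⟩
        · push_neg at h; push_neg; exact ⟨h.2.1, h.2.2⟩
      · intro h
        push_neg at h
        by_cases hx : x = v
        · exact Or.inl hx
        · exact Or.inr (by push_neg; exact ⟨hx, h.1, h.2⟩)
    · rintro x rfl y hy hr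
      rcases hnbr y hr with rfl | rfl
      · exact hy (by simp)
      · exact hy (by simp)

/-- Let `G` be a connected partially reflexive graph and let `v` be an
irreflexive vertex whose only neighbours are `a ≠ b`. Then `G` has a stable
cut iff `{v}` is a stable cut of `G`, or `{a, b}` is a stable cut of `G`, or
`G − {v}` has a stable cut. -/
theorem stmt6 {V : Type*} [Fintype V] (r : V → V → Prop) (hsymm : Symmetric r)
    (hconn : (SimpleGraph.fromRel r).Connected)
    (v a b : V) (hloop : ¬ r v v) (hab : a ≠ b) (hav : a ≠ v) (hbv : b ≠ v)
    (hadja : r v a) (hadjb : r v b)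
    (hunique : ∀ w, w ≠ v → r w v → w = a ∨ w = b) :
    HasPRStableCut r ↔
      PRStableCut r {v} ∨ PRStableCut r {a, b} ∨
        HasPRStableCut (fun x y : {w : V // w ≠ v} => r x.val y.val) := by
  have hnbr : ∀ w, r v w → w = a ∨ w = b := by
    intro w hw
    have hwv : w ≠ v := by rintro rfl; exact hloop hw
    exact hunique w hwv (hsymm hw)
  constructor
  · rintro ⟨S, hSind, A, B, hA, hB, hdisj, hcover, hsep⟩
    by_cases hvS : v ∈ S
    · right; right
      refine ⟨{x | x.val ∈ S}, fun u hu z hz => hSind u.val hu z.val hz,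
        {x | x.val ∈ A}, {x | x.val ∈ B}, ?_, ?_, ?_, ?_,
        fun x hx y hy => hsep x.val hx y.val hy⟩
      · obtain ⟨w, hw⟩ := hA
        have hwv : w ≠ v := by
          rintro rfl
          exact (hcover ▸ (Set.mem_union_left _ hw) : w ∈ Sᶜ) hvS
        exact ⟨⟨w, hwv⟩, hw⟩
      · obtain ⟨w, hw⟩ := hB
        have hwv : w ≠ v := by
          rintro rfl
          exact (hcover ▸ (Set.mem_union_right _ hw) : w ∈ Sᶜ) hvS
        exact ⟨⟨w, hwv⟩, hw⟩
      · rw [Set.disjoint_left]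
        intro x hx hx'
        exact Set.disjoint_left.mp hdisj hx hx'
      · ext x
        have h := Set.ext_iff.mp hcover x.val
        simp only [Set.mem_union, Set.mem_compl_iff] at h
        simpa using h
    · have hv : v ∈ A ∪ B := by rw [hcover]; exact hvS
      rcases hv with hvA | hvB
      · rcases stmt6_aux r v a b hab hav hbv hadja hadjb hnbr S A B hSind hB
          hdisj hcover hsep hvA with h | h
        · exact Or.inr (Or.inl h)
        · exact Or.inr (Or.inr h)
      · rcases stmt6_aux r v a b hab hav hbv hadja hadjb hnbr S B A hSind hA
          hdisj.symm (by rw [Set.union_comm]; exact hcover)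
          (fun x hx y hy hr => hsep y hy x hx (hsymm hr)) hvB with h | h
        · exact Or.inr (Or.inl h)
        · exact Or.inr (Or.inr h)
  · rintro (h | h | ⟨S', hind, A', B', hA', hB', hdisj', hcover', hsep'⟩)
    · exact ⟨_, h⟩
    · exact ⟨_, h⟩
    · have himg : ∀ (T : Set {w : V // w ≠ v}) (x : V),
          x ∈ Subtype.val '' T ↔ ∃ hx : x ≠ v, (⟨x, hx⟩ : {w : V // w ≠ v}) ∈ T := by
        intro T x
        constructor
        · rintro ⟨⟨y, hy⟩, hyT, rfl⟩; exact ⟨hy, hyT⟩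
        · rintro ⟨hx, hT⟩; exact ⟨⟨x, hx⟩, hT, rfl⟩
      set S : Set V := Subtype.val '' S' with hS
      set A₀ : Set V := Subtype.val '' A' with hA₀
      set B₀ : Set V := Subtype.val '' B' with hB₀
      have hvS : v ∉ S := by rw [himg]; rintro ⟨h, -⟩; exact h rfl
      have hvA₀ : v ∉ A₀ := by rw [himg]; rintro ⟨h, -⟩; exact h rfl
      have hvB₀ : v ∉ B₀ := by rw [himg]; rintro ⟨h, -⟩; exact h rfl
      have hSind : PRIndep r S := by
        intro u hu w hw
        obtain ⟨hu1, hu2⟩ := (himg S' u).mp hu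
        obtain ⟨hw1, hw2⟩ := (himg S' w).mp hw
        exact hind _ hu2 _ hw2
      have hdisj₀ : Disjoint A₀ B₀ := by
        rw [Set.disjoint_left]
        intro x hx hx'
        obtain ⟨h1, h2⟩ := (himg A' x).mp hx
        obtain ⟨h1', h2'⟩ := (himg B' x).mp hx'
        exact Set.disjoint_left.mp hdisj' h2 h2'
      have hcov : ∀ x, x ≠ v → ((x ∈ A₀ ∨ x ∈ B₀) ↔ x ∉ S) := by
        intro x hx
        have h := Set.ext_iff.mp hcover' ⟨x, hx⟩
        simp only [Set.mem_union, Set.mem_compl_iff] at h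
        constructor
        · intro hh hS'
          obtain ⟨h1, h2⟩ := (himg S' x).mp hS'
          refine h.mp ?_ h2
          rcases hh with hh | hh
          · exact Or.inl ((himg A' x).mp hh).2
          · exact Or.inr ((himg B' x).mp hh).2
        · intro hh
          have : (⟨x, hx⟩ : {w : V // w ≠ v}) ∉ S' := fun hc => hh ((himg S' x).mpr ⟨hx, hc⟩)
          rcases h.mpr this with hh' | hh'
          · exact Or.inl ((himg A' x).mpr ⟨hx, hh'⟩)
          · exact Or.inr ((himg B' x).mpr ⟨hx, hh'⟩)
      have hA₀ne : A₀.Nonempty := by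
        obtain ⟨x, hx⟩ := hA'
        exact ⟨x.val, (himg A' x.val).mpr ⟨x.2, by simpa using hx⟩⟩
      have hB₀ne : B₀.Nonempty := by
        obtain ⟨x, hx⟩ := hB'
        exact ⟨x.val, (himg B' x.val).mpr ⟨x.2, by simpa using hx⟩⟩
      have hsep₀ : ∀ x ∈ A₀, ∀ y ∈ B₀, ¬ r x y := by
        intro x hx y hy
        obtain ⟨h1, h2⟩ := (himg A' x).mp hx
        obtain ⟨h1', h2'⟩ := (himg B' y).mp hy
        exact hsep' _ h2 _ h2'
      by_cases hB : a ∈ B₀ ∨ b ∈ B₀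
      · by_cases hA : a ∈ A₀ ∨ b ∈ A₀
        · -- mixed case: S ∪ {v} is a stable cut with parts A₀, B₀
          have habS : a ∉ S ∧ b ∉ S := by
            rcases hA with hA | hA <;> rcases hB with hB | hB
            · exact absurd hB (Set.disjoint_left.mp hdisj₀ hA)
            · exact ⟨(hcov a hav).mp (Or.inl hA), (hcov b hbv).mp (Or.inr hB)⟩
            · exact ⟨(hcov a hav).mp (Or.inr hB), (hcov b hbv).mp (Or.inl hA)⟩
            · exact absurd hB (Set.disjoint_left.mp hdisj₀ hA)
          refine ⟨insert v S, ?_, A₀, B₀, hA₀ne, hB₀ne, hdisj₀, ?_, hsep₀⟩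
          · intro u hu w hw
            rcases hu with hu | hu
            · subst hu
              rcases hw with hw | hw
              · subst hw; exact hloop
              · intro hr
                rcases hnbr w hr with h | h <;> rw [h] at hw
                · exact habS.1 hw
                · exact habS.2 hw
            · rcases hw with hw | hw
              · intro hr
                rw [hw] at hr
                have huv : u ≠ v := fun h => hvS (h ▸ hu)
                rcases hunique u huv hr with h | h <;> rw [h] at hu
                · exact habS.1 hu
                · exact habS.2 hu
              · exact hSind u hu w hw
          · ext x
            simp only [Set.mem_union, Set.mem_compl_iff, Set.mem_insert_iff]
            constructor
            · intro hh
              have hxv : x ≠ v := by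
                rintro rfl
                rcases hh with hh | hh
                · exact hvA₀ hh
                · exact hvB₀ hh
              push_neg
              exact ⟨hxv, (hcov x hxv).mp hh⟩
            · intro hh
              push_neg at hh
              exact (hcov x hh.1).mpr hh.2
        · -- a, b ∉ A₀ : parts A₀, insert v B₀
          push_neg at hA
          refine ⟨S, hSind, A₀, insert v B₀, hA₀ne, ⟨v, Set.mem_insert _ _⟩, ?_, ?_, ?_⟩
          · rw [Set.disjoint_left]
            intro x hx hx'
            rcases hx' with rfl | hx'
            · exact hvA₀ hx
            · exact Set.disjoint_left.mp hdisj₀ hx hx'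
          · ext x
            simp only [Set.mem_union, Set.mem_compl_iff, Set.mem_insert_iff]
            constructor
            · rintro (hh | rfl | hh)
              · exact (hcov x (by rintro rfl; exact hvA₀ hh)).mp (Or.inl hh)
              · exact hvS
              · exact (hcov x (by rintro rfl; exact hvB₀ hh)).mp (Or.inr hh)
            · intro hh
              by_cases hxv : x = v
              · exact Or.inr (Or.inl hxv)
              · rcases (hcov x hxv).mpr hh with hh' | hh'
                · exact Or.inl hh'
                · exact Or.inr (Or.inr hh')
          · intro x hx y hy
            rcases hy with hy | hy
            · intro hr
              rw [hy] at hr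
              have hxv : x ≠ v := by rintro rfl; exact hvA₀ hx
              rcases hunique x hxv hr with h | h <;> rw [h] at hx
              · exact hA.1 hx
              · exact hA.2 hx
            · exact hsep₀ x hx y hy
      · -- a, b ∉ B₀ : parts insert v A₀, B₀
        push_neg at hB
        refine ⟨S, hSind, insert v A₀, B₀, ⟨v, Set.mem_insert _ _⟩, hB₀ne, ?_, ?_, ?_⟩
        · rw [Set.disjoint_left]
          rintro x (rfl | hx) hx'
          · exact hvB₀ hx'
          · exact Set.disjoint_left.mp hdisj₀ hx hx'
        · ext x
          simp only [Set.mem_union, Set.mem_compl_iff, Set.mem_insert_iff]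
          constructor
          · rintro ((rfl | hh) | hh)
            · exact hvS
            · exact (hcov x (by rintro rfl; exact hvA₀ hh)).mp (Or.inl hh)
            · exact (hcov x (by rintro rfl; exact hvB₀ hh)).mp (Or.inr hh)
          · intro hh
            by_cases hxv : x = v
            · exact Or.inl (Or.inl hxv)
            · rcases (hcov x hxv).mpr hh with hh' | hh'
              · exact Or.inl (Or.inr hh')
              · exact Or.inr hh'
        · intro x hx y hy
          rcases hx with hx | hx
          · subst hx
            intro hr
            rcases hnbr y hr with h | h <;> rw [h] at hy
            · exact hB.1 hy
            · exact hB.2 hy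
          · exact hsep₀ x hx y hy
end

section
/- Let G be a connected partially reflexive graph on a finite vertex set V and let v be a reflexive vertex with exactly two neighbours a ≠ b such that a and b are adjacent (so v lies in a triangle), i.e. N(v) = {a, b}, r(v,v) holds, and r(a,b) holds. Then G has a stable cut if and only if G − {v} has a stable cut. -/
private lemma fwd_aux_s7 {V : Type*} (r : V → V → Prop)
    (v a b : V) (hav : a ≠ v) (hbv : b ≠ v)
    (hadja : r v a) (hadjb : r v b) (hadjab : r a b)
    (S A B : Set V) (hS : PRIndep r S)
    (hB : B.Nonempty) (hdisj : Disjoint A B)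
    (hcover : A ∪ B = Sᶜ) (hsep : ∀ x ∈ A, ∀ y ∈ B, ¬ r x y) (hvA : v ∈ A) :
    HasPRStableCut (fun x y : {w : V // w ≠ v} => r x.val y.val) := by
  have haB : a ∉ B := fun h => hsep v hvA a h hadja
  have hbB : b ∉ B := fun h => hsep v hvA b h hadjb
  have hex : ∃ w ∈ A, w ≠ v := by
    by_contra h
    push_neg at h
    have haS : a ∈ S := by
      by_contra haS
      have h2 : a ∈ A ∪ B := (Set.ext_iff.mp hcover a).mpr haS
      rcases h2 with h1 | h1
      · exact hav (h a h1)
      · exact haB h1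
    have hbS : b ∈ S := by
      by_contra hbS
      have h2 : b ∈ A ∪ B := (Set.ext_iff.mp hcover b).mpr hbS
      rcases h2 with h1 | h1
      · exact hbv (h b h1)
      · exact hbB h1
    exact hS a haS b hbS hadjab
  obtain ⟨w, hwA, hwv⟩ := hex
  obtain ⟨z, hzB⟩ := hB
  have hzv : z ≠ v := fun h => (hdisj.ne_of_mem hvA hzB) h.symm
  refine ⟨{x | x.val ∈ S}, ?_, {x | x.val ∈ A}, {x | x.val ∈ B},
    ⟨⟨w, hwv⟩, hwA⟩, ⟨⟨z, hzv⟩, hzB⟩, ?_, ?_, ?_⟩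
  · exact fun u hu w hw => hS u.val hu w.val hw
  · rw [Set.disjoint_left]
    intro x hx hx'
    exact Set.disjoint_left.mp hdisj hx hx'
  · ext x
    have := Set.ext_iff.mp hcover x.val
    simpa using this
  · exact fun x hx y hy => hsep x.val hx y.val hy

private lemma bwd_aux {V : Type*} (r : V → V → Prop) (hsymm : Symmetric r)
    (v a b : V) (hav : a ≠ v) (hbv : b ≠ v)
    (hunique : ∀ w, w ≠ v → r w v → w = a ∨ w = b)
    (S' A' B' : Set {w : V // w ≠ v})
    (hS' : PRIndep (fun x y : {w : V // w ≠ v} => r x.val y.val) S')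
    (hB' : B'.Nonempty) (hdisj : Disjoint A' B')
    (hcover : A' ∪ B' = S'ᶜ) (hsep : ∀ x ∈ A', ∀ y ∈ B', ¬ r x.val y.val)
    (haB : (⟨a, hav⟩ : {w : V // w ≠ v}) ∉ B')
    (hbB : (⟨b, hbv⟩ : {w : V // w ≠ v}) ∉ B') :
    HasPRStableCut r := by
  obtain ⟨z, hzB⟩ := hB'
  refine ⟨Subtype.val '' S', ?_, Subtype.val '' A' ∪ {v}, Subtype.val '' B',
    ⟨v, Or.inr rfl⟩, ⟨z.val, z, hzB, rfl⟩, ?_, ?_, ?_⟩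
  · rintro _ ⟨u, hu, rfl⟩ _ ⟨w, hw, rfl⟩
    exact hS' u hu w hw
  · rw [Set.disjoint_left]
    rintro x (⟨u, hu, rfl⟩ | rfl) ⟨w, hw, heq⟩
    · have : u = w := Subtype.ext heq.symm
      exact Set.disjoint_left.mp hdisj hu (this ▸ hw)
    · exact w.2 heq
  · ext x
    by_cases hx : x = v
    · subst hx
      simp only [Set.mem_union, Set.mem_singleton_iff, Set.mem_compl_iff, Set.mem_image]
      constructor
      · rintro - ⟨w, -, heq⟩
        exact w.2 heq
      · intro _
        exact Or.inl (Or.inr trivial)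
    · have key := Set.ext_iff.mp hcover ⟨x, hx⟩
      simp only [Set.mem_union, Set.mem_compl_iff] at key
      simp only [Set.mem_union, Set.mem_singleton_iff, Set.mem_compl_iff, Set.mem_image]
      constructor
      · rintro ((⟨w, hw, heq⟩ | rfl) | ⟨w, hw, heq⟩) ⟨u, hu, hequ⟩
        · have : u ∈ S' := hu
          have hws : (⟨x, hx⟩ : {w : V // w ≠ v}) ∈ S' := by
            have : u = ⟨x, hx⟩ := Subtype.ext hequ
            exact this ▸ hu
          have hwA : (⟨x, hx⟩ : {w : V // w ≠ v}) ∈ A' := by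
            have : w = ⟨x, hx⟩ := Subtype.ext heq
            exact this ▸ hw
          exact key.mp (Or.inl hwA) hws
        · exact hx rfl
        · have hws : (⟨x, hx⟩ : {w : V // w ≠ v}) ∈ S' := by
            have : u = ⟨x, hx⟩ := Subtype.ext hequ
            exact this ▸ hu
          have hwB : (⟨x, hx⟩ : {w : V // w ≠ v}) ∈ B' := by
            have : w = ⟨x, hx⟩ := Subtype.ext heq
            exact this ▸ hw
          exact key.mp (Or.inr hwB) hws
      · intro hxs
        have hxs' : (⟨x, hx⟩ : {w : V // w ≠ v}) ∉ S' := by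
          intro h
          exact hxs ⟨⟨x, hx⟩, h, rfl⟩
        rcases key.mpr hxs' with h | h
        · exact Or.inl (Or.inl ⟨⟨x, hx⟩, h, rfl⟩)
        · exact Or.inr ⟨⟨x, hx⟩, h, rfl⟩
  · rintro x (⟨u, hu, rfl⟩ | rfl) _ ⟨w, hw, rfl⟩
    · exact hsep u hu w hw
    · intro hr
      rcases hunique w.val w.2 (hsymm hr) with h | h
      · have hwa : w = ⟨a, hav⟩ := Subtype.ext h
        rw [hwa] at hw
        exact haB hw
      · have hwb : w = ⟨b, hbv⟩ := Subtype.ext h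
        rw [hwb] at hw
        exact hbB hw

/-- Let `G` be a connected partially reflexive graph and let `v` be a
reflexive vertex whose only neighbours are `a ≠ b`, with `a` and `b`
adjacent (so `v` lies in a triangle). Then `G` has a stable cut iff
`G − {v}` has a stable cut. -/
theorem stmt7 {V : Type*} [Fintype V] (r : V → V → Prop) (hsymm : Symmetric r)
    (hconn : (SimpleGraph.fromRel r).Connected)
    (v a b : V) (hloop : r v v) (hab : a ≠ b) (hav : a ≠ v) (hbv : b ≠ v)
    (hadja : r v a) (hadjb : r v b) (hadjab : r a b)
    (hunique : ∀ w, w ≠ v → r w v → w = a ∨ w = b) :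
    HasPRStableCut r ↔
      HasPRStableCut (fun x y : {w : V // w ≠ v} => r x.val y.val) := by
  constructor
  · rintro ⟨S, hS, A, B, hA, hB, hdisj, hcover, hsep⟩
    have hvS : v ∉ S := fun h => hS v h v h hloop
    have hvAB : v ∈ A ∪ B := (Set.ext_iff.mp hcover v).mpr hvS
    rcases hvAB with hvA | hvB
    · exact fwd_aux_s7 r v a b hav hbv hadja hadjb hadjab S A B hS hB hdisj hcover hsep hvA
    · exact fwd_aux_s7 r v a b hav hbv hadja hadjb hadjab S B A hS hA hdisj.symm
        (by rw [Set.union_comm]; exact hcover)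
        (fun x hx y hy hr => hsep y hy x hx (hsymm hr)) hvB
  · rintro ⟨S', hS', A', B', hA', hB', hdisj, hcover, hsep⟩
    by_cases h1 : (⟨a, hav⟩ : {w : V // w ≠ v}) ∈ B' ∨ (⟨b, hbv⟩ : {w : V // w ≠ v}) ∈ B'
    · have key : (⟨a, hav⟩ : {w : V // w ≠ v}) ∉ A' ∧ (⟨b, hbv⟩ : {w : V // w ≠ v}) ∉ A' := by
        rcases h1 with h | h
        · exact ⟨fun ha => Set.disjoint_left.mp hdisj ha h,
            fun hb => hsep _ hb _ h (hsymm hadjab)⟩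
        · exact ⟨fun ha => hsep _ ha _ h hadjab,
            fun hb => Set.disjoint_left.mp hdisj hb h⟩
      exact bwd_aux r hsymm v a b hav hbv hunique S' B' A' hS' hA' hdisj.symm
        (by rw [Set.union_comm]; exact hcover)
        (fun x hx y hy hr => hsep y hy x hx (hsymm hr)) key.1 key.2
    · push_neg at h1
      exact bwd_aux r hsymm v a b hav hbv hunique S' A' B' hS' hB' hdisj hcover hsep h1.1 h1.2
end

section
/- Let G be a connected partially reflexive graph on a finite vertex set V and let x ≠ y be true twins of degree at least 3, i.e. r(x,y) holds, |N(x)| ≥ 3, and for every vertex u ∉ {x, y} one has r(x,u) if and only if r(y,u). Let G' be the partially reflexive graph on V ∖ {y} obtained from G by deleting y and adding a loop at x (i.e. G' agrees with G on V ∖ {y} except that r'(x,x) holds). Then G has a stable cut if and only if G' has a stable cut. -/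
private lemma mkCut {V : Type*} {r : V → V → Prop} (S A B : Set V)
    (h1 : PRIndep r S) (hA : A.Nonempty) (hB : B.Nonempty)
    (hd : Disjoint A B) (hu : A ∪ B = Sᶜ)
    (he : ∀ a ∈ A, ∀ b ∈ B, ¬ r a b) : HasPRStableCut r :=
  ⟨S, h1, A, B, hA, hB, hd, hu, he⟩

/-- Forward direction, case `y ∈ S`. -/
private lemma fwd_yS {V : Type*} {r : V → V → Prop} {x y : V}
    (hadj : r x y) {S A B : Set V} (hInd : PRIndep r S) (hyS : y ∈ S)
    (hA : A.Nonempty) (hB : B.Nonempty) (hdisj : Disjoint A B)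
    (hcup : A ∪ B = Sᶜ) (hAB : ∀ a ∈ A, ∀ b ∈ B, ¬ r a b) :
    HasPRStableCut (fun a b : {w : V // w ≠ y} =>
      r a.val b.val ∨ (a.val = x ∧ b.val = x)) := by
  have hsub : ∀ v ∈ A ∪ B, v ∉ S := fun v hv => by rw [hcup] at hv; exact hv
  have hxS : x ∉ S := fun h => hInd x h y hyS hadj
  obtain ⟨a0, ha0⟩ := hA
  obtain ⟨b0, hb0⟩ := hB
  refine mkCut {w | w.val ∈ S} {w | w.val ∈ A} {w | w.val ∈ B}
    ?_ ⟨⟨a0, fun h => hsub a0 (Or.inl ha0) (h ▸ hyS)⟩, ha0⟩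
    ⟨⟨b0, fun h => hsub b0 (Or.inr hb0) (h ▸ hyS)⟩, hb0⟩ ?_ ?_ ?_
  · rintro u hu v hv (h | ⟨h1, _⟩)
    · exact hInd u.val hu v.val hv h
    · exact hxS (h1 ▸ hu)
  · rw [Set.disjoint_left]
    intro w hwA hwB
    exact Set.disjoint_left.mp hdisj hwA hwB
  · ext w
    simp only [Set.mem_union, Set.mem_setOf_eq, Set.mem_compl_iff]
    rw [← Set.mem_union, hcup, Set.mem_compl_iff]
  · rintro a ha b hb (h | ⟨h1, h2⟩)
    · exact hAB a.val ha b.val hb h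
    · simp only [Set.mem_setOf_eq] at ha hb
      rw [h1] at ha; rw [h2] at hb
      exact Set.disjoint_left.mp hdisj ha hb

/-- Forward direction, case `x ∈ S` and `y ∈ A`. -/
private lemma fwd_xS {V : Type*} {r : V → V → Prop} {x y : V} (hxy : x ≠ y)
    (htwin : ∀ u, u ≠ x → u ≠ y → (r x u ↔ r y u))
    {S A B : Set V} (hInd : PRIndep r S) (hxS : x ∈ S) (hyA : y ∈ A)
    (hB : B.Nonempty) (hdisj : Disjoint A B) (hcup : A ∪ B = Sᶜ)
    (hAB : ∀ a ∈ A, ∀ b ∈ B, ¬ r a b) :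
    HasPRStableCut (fun a b : {w : V // w ≠ y} =>
      r a.val b.val ∨ (a.val = x ∧ b.val = x)) := by
  have hsub : ∀ v ∈ A ∪ B, v ∉ S := fun v hv => by rw [hcup] at hv; exact hv
  have hxB : x ∉ B := fun h => hsub x (Or.inr h) hxS
  have hyB : y ∉ B := Set.disjoint_left.mp hdisj hyA
  have hkey : ∀ b ∈ B, ¬ r x b := by
    intro b hb hrb
    have hbx : b ≠ x := fun h => hxB (h ▸ hb)
    have hby : b ≠ y := fun h => hyB (h ▸ hb)
    exact hAB y hyA b hb ((htwin b hbx hby).mp hrb)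
  obtain ⟨b0, hb0⟩ := hB
  refine mkCut {w | w.val ∈ S ∧ w.val ≠ x}
    {w | w.val ∈ A ∨ w.val = x} {w | w.val ∈ B}
    ?_ ⟨⟨x, hxy⟩, Or.inr rfl⟩ ⟨⟨b0, fun h => hyB (h ▸ hb0)⟩, hb0⟩ ?_ ?_ ?_
  · rintro u hu v hv (h | ⟨h1, _⟩)
    · exact hInd u.val hu.1 v.val hv.1 h
    · exact hu.2 h1
  · rw [Set.disjoint_left]
    rintro w (hw | hw) hwB
    · exact Set.disjoint_left.mp hdisj hw hwB
    · exact hxB (hw ▸ hwB)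
  · ext w
    simp only [Set.mem_union, Set.mem_setOf_eq, Set.mem_compl_iff]
    constructor
    · rintro ((hw | hw) | hw) ⟨hS, hne⟩
      · exact hsub _ (Or.inl hw) hS
      · exact hne hw
      · exact hsub _ (Or.inr hw) hS
    · intro h
      by_cases hwx : w.val = x
      · exact Or.inl (Or.inr hwx)
      · have hwS : w.val ∉ S := fun hS => h ⟨hS, hwx⟩
        have hm : w.val ∈ A ∪ B := by rw [hcup]; exact hwS
        rcases hm with h1 | h1
        · exact Or.inl (Or.inl h1)
        · exact Or.inr h1
  · rintro a (ha | ha) b hb (h | ⟨h1, h2⟩)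
    · exact hAB a.val ha b.val hb h
    · exact hxB (h2 ▸ hb)
    · exact hkey b.val hb (ha ▸ h)
    · exact hxB (h2 ▸ hb)

/-- Forward direction, case `x, y ∉ S`, both in `A`. -/
private lemma fwd_none {V : Type*} {r : V → V → Prop} {x y : V} (hxy : x ≠ y)
    {S A B : Set V} (hInd : PRIndep r S) (hxA : x ∈ A) (hyA : y ∈ A)
    (hB : B.Nonempty) (hdisj : Disjoint A B) (hcup : A ∪ B = Sᶜ)
    (hAB : ∀ a ∈ A, ∀ b ∈ B, ¬ r a b) :
    HasPRStableCut (fun a b : {w : V // w ≠ y} =>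
      r a.val b.val ∨ (a.val = x ∧ b.val = x)) := by
  have hsub : ∀ v ∈ A ∪ B, v ∉ S := fun v hv => by rw [hcup] at hv; exact hv
  have hxS : x ∉ S := hsub x (Or.inl hxA)
  have hyB : y ∉ B := Set.disjoint_left.mp hdisj hyA
  obtain ⟨b0, hb0⟩ := hB
  refine mkCut {w | w.val ∈ S} {w | w.val ∈ A} {w | w.val ∈ B}
    ?_ ⟨⟨x, hxy⟩, hxA⟩ ⟨⟨b0, fun h => hyB (h ▸ hb0)⟩, hb0⟩ ?_ ?_ ?_
  · rintro u hu v hv (h | ⟨h1, _⟩)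
    · exact hInd u.val hu v.val hv h
    · exact hxS (h1 ▸ hu)
  · rw [Set.disjoint_left]
    intro w hwA hwB
    exact Set.disjoint_left.mp hdisj hwA hwB
  · ext w
    simp only [Set.mem_union, Set.mem_setOf_eq, Set.mem_compl_iff]
    rw [← Set.mem_union, hcup, Set.mem_compl_iff]
  · rintro a ha b hb (h | ⟨h1, h2⟩)
    · exact hAB a.val ha b.val hb h
    · simp only [Set.mem_setOf_eq] at ha hb
      rw [h1] at ha; rw [h2] at hb
      exact Set.disjoint_left.mp hdisj ha hb

/-- Backward direction, case `x ∈ A'`. -/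
private lemma bwd {V : Type*} {r : V → V → Prop} {x y : V} (hxy : x ≠ y)
    (htwin : ∀ u, u ≠ x → u ≠ y → (r x u ↔ r y u))
    {S' A' B' : Set {w : V // w ≠ y}}
    (hInd : PRIndep (fun a b : {w : V // w ≠ y} =>
      r a.val b.val ∨ (a.val = x ∧ b.val = x)) S')
    (hx : (⟨x, hxy⟩ : {w : V // w ≠ y}) ∈ A')
    (hB : B'.Nonempty) (hdisj : Disjoint A' B') (hcup : A' ∪ B' = S'ᶜ)
    (hAB : ∀ a ∈ A', ∀ b ∈ B',
      ¬ (r a.val b.val ∨ (a.val = x ∧ b.val = x))) :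
    HasPRStableCut r := by
  obtain ⟨b0, hb0⟩ := hB
  refine mkCut (Subtype.val '' S') (Subtype.val '' A' ∪ {y}) (Subtype.val '' B')
    ?_ ⟨y, Or.inr rfl⟩ ⟨b0.val, ⟨b0, hb0, rfl⟩⟩ ?_ ?_ ?_
  · rintro u ⟨u', hu', rfl⟩ v ⟨v', hv', rfl⟩ h
    exact hInd u' hu' v' hv' (Or.inl h)
  · rw [Set.disjoint_left]
    rintro w (⟨a', ha', rfl⟩ | hw) ⟨b', hb', hbe⟩
    · exact Set.disjoint_left.mp hdisj ha' (Subtype.ext hbe.symm ▸ hb')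
    · exact b'.prop (hbe.trans hw)
  · ext v
    simp only [Set.mem_union, Set.mem_image, Set.mem_compl_iff,
      Set.mem_singleton_iff]
    constructor
    · rintro ((⟨a', ha', rfl⟩ | rfl) | ⟨b', hb', rfl⟩) ⟨s', hs', hse⟩
      · have : a' ∉ S' := by
          have : a' ∈ S'ᶜ := by rw [← hcup]; exact Or.inl ha'
          exact this
        exact this (Subtype.ext hse.symm ▸ hs')
      · exact s'.prop hse
      · have : b' ∉ S' := by
          have : b' ∈ S'ᶜ := by rw [← hcup]; exact Or.inr hb'
          exact this
        exact this (Subtype.ext hse.symm ▸ hs')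
    · intro hv
      by_cases hvy : v = y
      · exact Or.inl (Or.inr hvy)
      · have hvS : (⟨v, hvy⟩ : {w : V // w ≠ y}) ∉ S' :=
          fun h => hv ⟨⟨v, hvy⟩, h, rfl⟩
        have hm : (⟨v, hvy⟩ : {w : V // w ≠ y}) ∈ A' ∪ B' := by
          rw [hcup]; exact hvS
        rcases hm with h1 | h1
        · exact Or.inl (Or.inl ⟨⟨v, hvy⟩, h1, rfl⟩)
        · exact Or.inr ⟨⟨v, hvy⟩, h1, rfl⟩
  · rintro a (⟨a', ha', rfl⟩ | rfl) b ⟨b', hb', rfl⟩ h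
    · exact hAB a' ha' b' hb' (Or.inl h)
    · have hbx : b'.val ≠ x := by
        intro he
        have hbe : b' = ⟨x, hxy⟩ := Subtype.ext he
        exact Set.disjoint_left.mp hdisj hx (hbe ▸ hb')
      have : r x b'.val := (htwin b'.val hbx b'.prop).mpr h
      exact hAB ⟨x, hxy⟩ hx b' hb' (Or.inl this)

/-- Let `G` be a connected partially reflexive graph and let `x ≠ y` be true
twins of degree at least `3`. Let `G'` be obtained from `G` by deleting `y`
and adding a loop at `x`. Then `G` has a stable cut iff `G'` has one. -/
theorem stmt8 {V : Type*} [Fintype V] (r : V → V → Prop) (hsymm : Symmetric r)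
    (hconn : (SimpleGraph.fromRel r).Connected)
    (x y : V) (hxy : x ≠ y) (hadj : r x y)
    (hdeg : 3 ≤ Set.ncard {u | u ≠ x ∧ r u x})
    (htwin : ∀ u, u ≠ x → u ≠ y → (r x u ↔ r y u)) :
    HasPRStableCut r ↔
      HasPRStableCut (fun a b : {w : V // w ≠ y} =>
        r a.val b.val ∨ (a.val = x ∧ b.val = x)) := by
  constructor
  · rintro ⟨S, hInd, A, B, hA, hB, hdisj, hcup, hAB⟩
    have hAB' : ∀ b ∈ B, ∀ a ∈ A, ¬ r b a :=
      fun b hb a ha h => hAB a ha b hb (hsymm h)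
    have hcup' : B ∪ A = Sᶜ := by rw [Set.union_comm]; exact hcup
    by_cases hyS : y ∈ S
    · exact fwd_yS hadj hInd hyS hA hB hdisj hcup hAB
    · have hy : y ∈ A ∨ y ∈ B := by
        have : y ∈ Sᶜ := hyS
        rw [← hcup] at this; exact this
      by_cases hxS : x ∈ S
      · rcases hy with hyA | hyB
        · exact fwd_xS hxy htwin hInd hxS hyA hB hdisj hcup hAB
        · exact fwd_xS hxy htwin hInd hxS hyB hA hdisj.symm hcup' hAB'
      · have hx : x ∈ A ∨ x ∈ B := by
          have : x ∈ Sᶜ := hxS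
          rw [← hcup] at this; exact this
        rcases hx with hxA | hxB
        · have hyA : y ∈ A := by
            rcases hy with h | h
            · exact h
            · exact absurd hadj (hAB x hxA y h)
          exact fwd_none hxy hInd hxA hyA hB hdisj hcup hAB
        · have hyB : y ∈ B := by
            rcases hy with h | h
            · exact absurd (hsymm hadj) (hAB y h x hxB)
            · exact h
          exact fwd_none hxy hInd hxB hyB hA hdisj.symm hcup' hAB'
  · rintro ⟨S', hInd', A', B', hA', hB', hdisj', hcup', hAB'⟩
    have hxS : (⟨x, hxy⟩ : {w : V // w ≠ y}) ∉ S' :=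
      fun h => hInd' _ h _ h (Or.inr ⟨rfl, rfl⟩)
    have hx : (⟨x, hxy⟩ : {w : V // w ≠ y}) ∈ A' ∪ B' := by
      rw [hcup']; exact hxS
    rcases hx with hxA | hxB
    · exact bwd hxy htwin hInd' hxA hB' hdisj' hcup' hAB'
    · refine bwd hxy htwin hInd' hxB hA' hdisj'.symm
        (by rw [Set.union_comm]; exact hcup')
        (fun b hb a ha h => hAB' a ha b hb ?_)
      rcases h with h | ⟨h1, h2⟩
      · exact Or.inl (hsymm h)
      · exact Or.inr ⟨h2, h1⟩
end

section
/- Let G be a finite simple graph that is H1-subgraph-free, and let u and v be adjacent vertices of G each having degree at least 3. Then u and v have a common neighbour; in particular, u and v lie in a triangle of G. -/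
/-- The graph `H1`: vertices `c1 = 0`, `c2 = 1`, `p1 = 2`, `p2 = 3`,
`p3 = 4`, `p4 = 5`, with edges `c1c2`, `c1p1`, `c1p2`, `c2p3`, `c2p4`. -/
def H1 : SimpleGraph (Fin 6) :=
  SimpleGraph.fromRel (fun a b =>
    (a = 0 ∧ b = 1) ∨ (a = 0 ∧ b = 2) ∨ (a = 0 ∧ b = 3) ∨
    (a = 1 ∧ b = 4) ∨ (a = 1 ∧ b = 5))

/-- `G` contains `H` as a subgraph: there is an injective map from the vertices
of `H` to those of `G` sending edges of `H` to edges of `G`. -/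
def ContainsSubgraph {V W : Type*} (G : SimpleGraph V) (H : SimpleGraph W) : Prop :=
  ∃ f : W → V, Function.Injective f ∧ ∀ a b : W, H.Adj a b → G.Adj (f a) (f b)

lemma two_avoiding {V : Type*} (s : Set V) (hs : 3 ≤ s.ncard) (v : V) :
    ∃ a b, a ∈ s ∧ b ∈ s ∧ a ≠ b ∧ a ≠ v ∧ b ≠ v := by
  obtain ⟨a, b, c, ha, hb, hc, hab, hac, hbc⟩ :=
    (Set.two_lt_ncard_iff (s := s) (Set.finite_of_ncard_pos (by omega))).1 (by omega)
  by_cases hav : a = v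
  · exact ⟨b, c, hb, hc, hbc, fun h => hab (hav ▸ h.symm ▸ rfl),
      fun h => hac (hav ▸ h.symm ▸ rfl)⟩
  · by_cases hbv : b = v
    · exact ⟨a, c, ha, hc, hac, hav, fun h => hbc (hbv ▸ h.symm ▸ rfl)⟩
    · exact ⟨a, b, ha, hb, hab, hav, hbv⟩

/-- In an `H1`-subgraph-free graph, any two adjacent vertices of degree at
least `3` have a common neighbour (hence lie in a triangle). -/
theorem stmt9 {V : Type*} [Fintype V] (G : SimpleGraph V)
    (hfree : ¬ ContainsSubgraph G H1) (u v : V) (huv : G.Adj u v)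
    (hu : 3 ≤ (G.neighborSet u).ncard) (hv : 3 ≤ (G.neighborSet v).ncard) :
    ∃ w : V, G.Adj u w ∧ G.Adj v w := by
  by_contra h
  push_neg at h
  obtain ⟨p1, p2, hp1, hp2, hp12, hp1v, hp2v⟩ := two_avoiding _ hu v
  obtain ⟨p3, p4, hp3, hp4, hp34, hp3u, hp4u⟩ := two_avoiding _ hv u
  rw [SimpleGraph.mem_neighborSet] at hp1 hp2 hp3 hp4
  have huv' : u ≠ v := huv.ne
  have hp1u : p1 ≠ u := fun e => G.loopless.irrefl u (e ▸ hp1)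
  have hp2u : p2 ≠ u := fun e => G.loopless.irrefl u (e ▸ hp2)
  have hp3v : p3 ≠ v := fun e => G.loopless.irrefl v (e ▸ hp3)
  have hp4v : p4 ≠ v := fun e => G.loopless.irrefl v (e ▸ hp4)
  have hp13 : p1 ≠ p3 := fun e => h p1 hp1 (e ▸ hp3)
  have hp14 : p1 ≠ p4 := fun e => h p1 hp1 (e ▸ hp4)
  have hp23 : p2 ≠ p3 := fun e => h p2 hp2 (e ▸ hp3)
  have hp24 : p2 ≠ p4 := fun e => h p2 hp2 (e ▸ hp4)
  apply hfree
  refine ⟨![u, v, p1, p2, p3, p4], ?_, ?_⟩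
  · rw [← List.nodup_ofFn]
    simp only [List.ofFn_succ, Fin.succ_zero_eq_one, List.ofFn_zero, List.nodup_cons,
      List.mem_cons, List.mem_singleton, List.not_mem_nil, List.nodup_nil, Matrix.cons_val_zero,
      Matrix.cons_val_succ, List.mem_nil_iff, or_false, not_or, and_true]
    refine ⟨⟨huv', hp1u.symm, hp2u.symm, hp3u.symm, hp4u.symm⟩,
      ⟨hp1v.symm, hp2v.symm, hp3v.symm, hp4v.symm⟩, ⟨hp12, hp13, hp14⟩, ⟨hp23, hp24⟩, hp34, not_false⟩
  · intro a b hab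
    rw [H1, SimpleGraph.fromRel_adj] at hab
    fin_cases a <;> fin_cases b <;>
      first
        | exact absurd hab (by decide)
        | exact huv | exact huv.symm
        | exact hp1 | exact hp2 | exact hp3 | exact hp4
        | exact hp1.symm | exact hp2.symm | exact hp3.symm | exact hp4.symm
end

section
/- Let G be a finite simple graph that is H1-subgraph-free and let x, y, z, w be four distinct pairwise adjacent vertices of G (a K4 subgraph). Then at most one vertex of G outside {x, y, z, w} has a neighbour in {x, y, z, w}. -/
set_option maxRecDepth 8000


lemma cons_val_five {α : Type*} (a : α) (u : Fin 5 → α) :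
    Matrix.vecCons a u 5 = u 4 := rfl

lemma buildA {V : Type*} (G : SimpleGraph V) {a b c d u v : V}
    (hab : G.Adj a b) (hac : G.Adj a c) (had : G.Adj a d)
    (hbc : G.Adj b c) (hbd : G.Adj b d) (hcd : G.Adj c d)
    (hua : G.Adj u a) (hva : G.Adj v a)
    (h1 : u ≠ a) (h2 : u ≠ b) (h3 : u ≠ c) (h4 : u ≠ d)
    (h5 : v ≠ a) (h6 : v ≠ b) (h7 : v ≠ c) (h8 : v ≠ d)
    (huv : u ≠ v) : ContainsSubgraph G H1 := by
  have n1 := hab.ne; have n2 := hac.ne; have n3 := had.ne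
  have n4 := hbc.ne; have n5 := hbd.ne; have n6 := hcd.ne
  refine ⟨![a, b, u, v, c, d], ?_, ?_⟩
  · intro i j h
    fin_cases i <;> fin_cases j <;>
      simp_all [cons_val_five]
  · intro i j h
    fin_cases i <;> fin_cases j <;>
      simp_all [H1, cons_val_five] <;>
      first
        | exact hab | exact hab.symm | exact hua.symm | exact hua
        | exact hva.symm | exact hva | exact hbc | exact hbc.symm
        | exact hbd | exact hbd.symm

lemma buildB {V : Type*} (G : SimpleGraph V) {a b c d u v : V}
    (hab : G.Adj a b) (hac : G.Adj a c) (had : G.Adj a d)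
    (hbc : G.Adj b c) (hbd : G.Adj b d) (hcd : G.Adj c d)
    (hua : G.Adj u a) (hvb : G.Adj v b)
    (h1 : u ≠ a) (h2 : u ≠ b) (h3 : u ≠ c) (h4 : u ≠ d)
    (h5 : v ≠ a) (h6 : v ≠ b) (h7 : v ≠ c) (h8 : v ≠ d)
    (huv : u ≠ v) : ContainsSubgraph G H1 := by
  have n1 := hab.ne; have n2 := hac.ne; have n3 := had.ne
  have n4 := hbc.ne; have n5 := hbd.ne; have n6 := hcd.ne
  refine ⟨![a, b, u, c, v, d], ?_, ?_⟩
  · intro i j h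
    fin_cases i <;> fin_cases j <;>
      simp_all [cons_val_five]
  · intro i j h
    fin_cases i <;> fin_cases j <;>
      simp_all [H1, cons_val_five] <;>
      first
        | exact hab | exact hab.symm | exact hua.symm | exact hua
        | exact hvb.symm | exact hvb | exact hac | exact hac.symm
        | exact hbd | exact hbd.symm

/-- In an `H1`-subgraph-free graph, if `x, y, z, w` are four pairwise adjacent
vertices (a `K4`), then at most one vertex outside `{x, y, z, w}` has a
neighbour in `{x, y, z, w}`. -/
theorem stmt10 {V : Type*} [Fintype V] (G : SimpleGraph V)
    (hfree : ¬ ContainsSubgraph G H1) (x y z w : V)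
    (hxy : G.Adj x y) (hxz : G.Adj x z) (hxw : G.Adj x w)
    (hyz : G.Adj y z) (hyw : G.Adj y w) (hzw : G.Adj z w) :
    {v | v ∉ ({x, y, z, w} : Set V) ∧
        ∃ t ∈ ({x, y, z, w} : Set V), G.Adj v t}.Subsingleton := by
  intro p hp q hq
  by_contra hne
  obtain ⟨hp1, t, ht, hpt⟩ := hp
  obtain ⟨hq1, s, hs, hqs⟩ := hq
  simp only [Set.mem_insert_iff, Set.mem_singleton_iff, not_or] at hp1 hq1 ht hs
  obtain ⟨px, py, pz, pw⟩ := hp1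
  obtain ⟨qx, qy, qz, qw⟩ := hq1
  apply hfree
  have hne' : q ≠ p := fun h => hne h.symm
  rcases ht with h | h | h | h <;> rw [h] at hpt <;>
    rcases hs with h' | h' | h' | h' <;> rw [h'] at hqs
  · exact buildA G hxy hxz hxw hyz hyw hzw hpt hqs px py pz pw qx qy qz qw hne
  · exact buildB G hxy hxz hxw hyz hyw hzw hpt hqs px py pz pw qx qy qz qw hne
  · exact buildB G hxz hxy hxw hyz.symm hzw hyw hpt hqs px pz py pw qx qz qy qw hne
  · exact buildB G hxw hxy hxz hyw.symm hzw.symm hyz hpt hqs px pw py pz qx qw qy qz hne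
  · exact buildB G hxy.symm hyz hyw hxz hxw hzw hpt hqs py px pz pw qy qx qz qw hne
  · exact buildA G hxy.symm hyz hyw hxz hxw hzw hpt hqs py px pz pw qy qx qz qw hne
  · exact buildB G hyz hxy.symm hyw hxz.symm hzw hxw hpt hqs py pz px pw qy qz qx qw hne
  · exact buildB G hyw hxy.symm hyz hxw.symm hzw.symm hxz hpt hqs py pw px pz qy qw qx qz hne
  · exact buildB G hxz.symm hyz.symm hzw hxy hxw hyw hpt hqs pz px py pw qz qx qy qw hne
  · exact buildB G hyz.symm hxz.symm hzw hxy.symm hyw hxw hpt hqs pz py px pw qz qy qx qw hne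
  · exact buildA G hxz.symm hyz.symm hzw hxy hxw hyw hpt hqs pz px py pw qz qx qy qw hne
  · exact buildB G hzw hxz.symm hyz.symm hxw.symm hyw.symm hxy hpt hqs pz pw px py qz qw qx qy hne
  · exact buildB G hxw.symm hyw.symm hzw.symm hxy hxz hyz hpt hqs pw px py pz qw qx qy qz hne
  · exact buildB G hyw.symm hxw.symm hzw.symm hxy.symm hyz hxz hpt hqs pw py px pz qw qy qx qz hne
  · exact buildB G hzw.symm hxw.symm hyw.symm hxz.symm hyz.symm hxy hpt hqs pw pz px py qw qz qx qy hne
  · exact buildA G hxw.symm hyw.symm hzw.symm hxy hxz hyz hpt hqs pw px py pz qw qx qy qz hne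
end

section
/- Let G be a finite simple graph that is H1-subgraph-free and let x, y, z, w be four distinct vertices forming a diamond: z and w are adjacent, each of x and y is adjacent to both z and w, and x and y are not adjacent. Then x has at most one neighbour outside {z, w}. -/
set_option maxRecDepth 8000

/-- In an `H1`-subgraph-free graph, if the distinct vertices `x, y, z, w` form
a diamond (`z` and `w` adjacent, `x` and `y` both adjacent to `z` and `w`,
`x` and `y` nonadjacent), then `x` has at most one neighbour outside
`{z, w}`. -/
theorem stmt11 {V : Type*} [Fintype V] (G : SimpleGraph V)
    (hfree : ¬ ContainsSubgraph G H1) (x y z w : V) (hxy : x ≠ y)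
    (hzw : G.Adj z w) (hxz : G.Adj x z) (hxw : G.Adj x w)
    (hyz : G.Adj y z) (hyw : G.Adj y w) (hnxy : ¬ G.Adj x y) :
    {u | G.Adj x u ∧ u ≠ z ∧ u ≠ w}.Subsingleton := by
  intro u hu v hv
  by_contra hne
  obtain ⟨hxu, huz, huw⟩ := hu
  obtain ⟨hxv, hvz, hvw⟩ := hv
  apply hfree
  refine ⟨![x, z, u, v, w, y], ?_, ?_⟩
  · have hxu' := hxu.ne
    have hxv' := hxv.ne
    have huy : u ≠ y := fun h => hnxy (h ▸ hxu)
    have hvy : v ≠ y := fun h => hnxy (h ▸ hxv)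
    have hxz' := hxz.ne
    have hxw' := hxw.ne
    have hzw' := hzw.ne
    have hzy : z ≠ y := fun h => hyz.ne (h.symm)
    have hwy : w ≠ y := fun h => hyw.ne (h.symm)
    intro a b hab
    fin_cases a <;> fin_cases b <;> simp at hab ⊢ <;>
      first
        | rfl
        | exact absurd hab (by tauto)
  · intro a b hab
    have h := hab
    rw [H1, SimpleGraph.fromRel_adj] at h
    fin_cases a <;> fin_cases b <;> simp_all <;>
      first
        | exact hxz | exact hxu | exact hxv | exact hzw | exact hyz.symm
        | exact hxz.symm | exact hxu.symm | exact hxv.symm | exact hzw.symm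
        | exact hyz
end

section
/- Let G be a finite simple graph that is H1-subgraph-free, let x, y, z be three pairwise adjacent vertices (a triangle), and let u be a vertex outside {x, y, z} that is adjacent to x but adjacent to neither y nor z. Then u has degree at most 2 in G. -/
/-- In an `H1`-subgraph-free graph, if `x, y, z` form a triangle and `u` is a
vertex outside the triangle adjacent to `x` but to neither `y` nor `z`, then
`u` has degree at most `2`. -/
theorem stmt12 {V : Type*} [Fintype V] (G : SimpleGraph V)
    (hfree : ¬ ContainsSubgraph G H1) (x y z u : V)
    (hxy : G.Adj x y) (hxz : G.Adj x z) (hyz : G.Adj y z)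
    (hu : u ∉ ({x, y, z} : Set V)) (hux : G.Adj u x)
    (huy : ¬ G.Adj u y) (huz : ¬ G.Adj u z) :
    (G.neighborSet u).ncard ≤ 2 := by
  by_contra h
  push_neg at h
  simp only [Set.mem_insert_iff, Set.mem_singleton_iff, not_or] at hu
  obtain ⟨hux', huy', huz'⟩ := hu
  have hfin : (G.neighborSet u).Finite := Set.toFinite _
  have hxmem : x ∈ G.neighborSet u := hux
  have h2 : 2 ≤ (G.neighborSet u \ {x}).ncard := by
    have := Set.ncard_diff_singleton_add_one hxmem hfin
    omega
  have hfin2 : (G.neighborSet u \ {x}).Finite := hfin.diff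
  obtain ⟨a, b, ha, hb, hab⟩ := (Set.one_lt_ncard_iff hfin2).mp (by omega)
  obtain ⟨hane, haG⟩ : a ≠ x ∧ G.Adj u a := ⟨ha.2, ha.1⟩
  obtain ⟨hbne, hbG⟩ : b ≠ x ∧ G.Adj u b := ⟨hb.2, hb.1⟩
  have hay : a ≠ y := fun e => huy (e ▸ haG)
  have haz : a ≠ z := fun e => huz (e ▸ haG)
  have hby : b ≠ y := fun e => huy (e ▸ hbG)
  have hbz : b ≠ z := fun e => huz (e ▸ hbG)
  have hau : a ≠ u := haG.ne'
  have hbu : b ≠ u := hbG.ne'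
  have hxyne : x ≠ y := hxy.ne
  have hxzne : x ≠ z := hxz.ne
  have hyzne : y ≠ z := hyz.ne
  apply hfree
  refine ⟨![x, u, y, z, a, b], ?_, ?_⟩
  · intro i j hij
    fin_cases i <;> fin_cases j <;>
      first
      | rfl
      | exact absurd hij hxyne
      | exact absurd hij hxyne.symm
      | exact absurd hij hxzne
      | exact absurd hij hxzne.symm
      | exact absurd hij hyzne
      | exact absurd hij hyzne.symm
      | exact absurd hij hux'
      | exact absurd hij (fun e => hux' e.symm)
      | exact absurd hij huy'
      | exact absurd hij (fun e => huy' e.symm)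
      | exact absurd hij huz'
      | exact absurd hij (fun e => huz' e.symm)
      | exact absurd hij hane
      | exact absurd hij hane.symm
      | exact absurd hij hbne
      | exact absurd hij hbne.symm
      | exact absurd hij hay
      | exact absurd hij hay.symm
      | exact absurd hij hby
      | exact absurd hij hby.symm
      | exact absurd hij haz
      | exact absurd hij haz.symm
      | exact absurd hij hbz
      | exact absurd hij hbz.symm
      | exact absurd hij hau
      | exact absurd hij hau.symm
      | exact absurd hij hbu
      | exact absurd hij hbu.symm
      | exact absurd hij hab
      | exact absurd hij hab.symm
  · intro i j hij
    rw [H1, SimpleGraph.fromRel_adj] at hij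
    obtain ⟨hne, hc⟩ := hij
    rcases hc with (⟨rfl,rfl⟩|⟨rfl,rfl⟩|⟨rfl,rfl⟩|⟨rfl,rfl⟩|⟨rfl,rfl⟩)|(⟨rfl,rfl⟩|⟨rfl,rfl⟩|⟨rfl,rfl⟩|⟨rfl,rfl⟩|⟨rfl,rfl⟩) <;>
      simp only [Matrix.cons_val_zero, Matrix.cons_val_one, Matrix.head_cons,
        Matrix.cons_val_succ, Matrix.cons_val_fin_one, show ((2:Fin 6)) = (2:Fin 6) from rfl] <;>
      first
      | exact hux.symm
      | exact hxy
      | exact hxz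
      | exact hux
      | exact hxy.symm
      | exact hxz.symm
      | exact haG
      | exact hbG
      | exact haG.symm
      | exact hbG.symm
end

section
/- Let G be a finite simple graph that is H1-subgraph-free and let x, y, v, u, w be five distinct vertices such that {x, y, v} and {u, v, w} both induce triangles of G (two triangles sharing exactly the vertex v). Then no vertex among x, y, u, w has a neighbour outside {x, y, v, u, w}. -/

lemma h1_sub {V : Type*} (G : SimpleGraph V) (a b c d e f : V)
    (h12 : a ≠ b) (h13 : a ≠ c) (h14 : a ≠ d) (h15 : a ≠ e) (h16 : a ≠ f)
    (h23 : b ≠ c) (h24 : b ≠ d) (h25 : b ≠ e) (h26 : b ≠ f)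
    (h34 : c ≠ d) (h35 : c ≠ e) (h36 : c ≠ f)
    (h45 : d ≠ e) (h46 : d ≠ f) (h56 : e ≠ f)
    (e1 : G.Adj a b) (e2 : G.Adj a c) (e3 : G.Adj a d)
    (e4 : G.Adj b e) (e5 : G.Adj b f) : ContainsSubgraph G H1 := by
  refine ⟨fun i => match i with
    | 0 => a | 1 => b | 2 => c | 3 => d | 4 => e | 5 => f, ?_, ?_⟩
  · intro i j hij
    fin_cases i <;> fin_cases j <;>
      first
        | rfl
        | exact absurd hij (by assumption)
        | exact absurd hij.symm (by assumption)
  · intro i j hij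
    fin_cases i <;> fin_cases j <;> simp [H1] at hij <;>
      first
        | exact e1 | exact e2 | exact e3 | exact e4 | exact e5
        | exact e1.symm | exact e2.symm | exact e3.symm | exact e4.symm | exact e5.symm

/-- In an `H1`-subgraph-free graph, if `{x, y, v}` and `{u, v, w}` are two
triangles on five distinct vertices (sharing exactly the vertex `v`), then no
vertex among `x, y, u, w` has a neighbour outside `{x, y, v, u, w}`. -/
theorem stmt13 {V : Type*} [Fintype V] (G : SimpleGraph V)
    (hfree : ¬ ContainsSubgraph G H1) (x y v u w : V)
    (hdist : List.Pairwise (· ≠ ·) [x, y, v, u, w])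
    (hxy : G.Adj x y) (hxv : G.Adj x v) (hyv : G.Adj y v)
    (huv : G.Adj u v) (huw : G.Adj u w) (hvw : G.Adj v w) :
    ∀ t ∈ ({x, y, u, w} : Set V), ∀ s : V, G.Adj t s →
      s ∈ ({x, y, v, u, w} : Set V) := by
  simp only [List.pairwise_cons, List.mem_cons, List.not_mem_nil] at hdist
  obtain ⟨hx, hy, hv, hu, -⟩ := hdist
  intro t ht s hts
  by_contra hs
  simp only [Set.mem_insert_iff, Set.mem_singleton_iff, not_or] at ht hs
  obtain ⟨hsx, hsy, hsv, hsu, hsw⟩ := hs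
  have nxy : x ≠ y := hx y (by simp)
  have nxv : x ≠ v := hx v (by simp)
  have nxu : x ≠ u := hx u (by simp)
  have nxw : x ≠ w := hx w (by simp)
  have nyv : y ≠ v := hy v (by simp)
  have nyu : y ≠ u := hy u (by simp)
  have nyw : y ≠ w := hy w (by simp)
  have nvu : v ≠ u := hv u (by simp)
  have nvw : v ≠ w := hv w (by simp)
  have nuw : u ≠ w := hu w (by simp)
  apply hfree
  have htsne := hts.ne
  rcases ht with rfl | rfl | rfl | rfl
  · apply h1_sub G t v s y u w <;>
      first | assumption | exact Ne.symm (by assumption) | exact SimpleGraph.Adj.symm (by assumption)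
  · apply h1_sub G t v s x u w <;>
      first | assumption | exact Ne.symm (by assumption) | exact SimpleGraph.Adj.symm (by assumption)
  · apply h1_sub G t v s w x y <;>
      first | assumption | exact Ne.symm (by assumption) | exact SimpleGraph.Adj.symm (by assumption)
  · apply h1_sub G t v s u x y <;>
      first | assumption | exact Ne.symm (by assumption) | exact SimpleGraph.Adj.symm (by assumption)
end

section
/- Let G be a multigraph given by a finite vertex type V, a finite edge type E, and an endpoint map ε, and let L(G) be its line graph. (i) If L(G) has a stable cut, then G has a multigraph matching cut. (ii) If G has a multigraph matching cut and every vertex of G is incident to at least 2 edges of E, then L(G) has a stable cut. -/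
/-- `(A, B)` is a multigraph matching cut of the multigraph with vertex type
`V`, edge type `E` and endpoint map `ε`: a partition of `V` into two nonempty
sets such that every vertex is incident to at most one edge whose other
endpoint lies on the opposite side of the partition. -/
def MGMatchingCut {V E : Type*} (ε : E → Sym2 V) (A B : Set V) : Prop :=
  A.Nonempty ∧ B.Nonempty ∧ Disjoint A B ∧ A ∪ B = Set.univ ∧
    (∀ v ∈ A, {e : E | ∃ u ∈ B, ε e = s(v, u)}.Subsingleton) ∧
    (∀ v ∈ B, {e : E | ∃ u ∈ A, ε e = s(v, u)}.Subsingleton)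

/-- The multigraph with endpoint map `ε` has a multigraph matching cut. -/
def HasMGMatchingCut {V E : Type*} (ε : E → Sym2 V) : Prop :=
  ∃ A B : Set V, MGMatchingCut ε A B

/-- The line graph of the multigraph with endpoint map `ε`: the simple graph on
the edge type `E` in which two distinct edges are adjacent iff they share an
endpoint. -/
def MGLineGraph {V E : Type*} (ε : E → Sym2 V) : SimpleGraph E :=
  SimpleGraph.fromRel (fun e f => ∃ v : V, v ∈ ε e ∧ v ∈ ε f)

/-- A stable cut of a simple graph `H`: an independent set `S` such that the
complement of `S` splits into two nonempty sets with no edges between them. -/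
def SimpleHasStableCut {W : Type*} (H : SimpleGraph W) : Prop :=
  ∃ S : Set W, (∀ u ∈ S, ∀ v ∈ S, ¬ H.Adj u v) ∧
    ∃ A B : Set W, A.Nonempty ∧ B.Nonempty ∧ Disjoint A B ∧ A ∪ B = Sᶜ ∧
      ∀ a ∈ A, ∀ b ∈ B, ¬ H.Adj a b

private lemma sym2_rep {V : Type*} (s : Sym2 V) : ∃ x y, s = s(x, y) := by
  induction s using Sym2.ind with
  | _ x y => exact ⟨x, y, rfl⟩

/-- Let `G` be a multigraph with finite vertex type `V`, finite edge type `E`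
and endpoint map `ε` (each edge has two distinct endpoints).
(i) If the line graph `L(G)` has a stable cut, then `G` has a multigraph
matching cut. (ii) If `G` has a multigraph matching cut and every vertex is
incident to at least two edges, then `L(G)` has a stable cut. -/
theorem stmt15 {V E : Type*} [Fintype V] [Fintype E] (ε : E → Sym2 V)
    (hloopless : ∀ e : E, ¬ (ε e).IsDiag) :
    (SimpleHasStableCut (MGLineGraph ε) → HasMGMatchingCut ε) ∧
      ((HasMGMatchingCut ε ∧ ∀ v : V, 2 ≤ Set.ncard {e : E | v ∈ ε e}) →
        SimpleHasStableCut (MGLineGraph ε)) := by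
  classical
  have adj_of : ∀ e f : E, e ≠ f → ∀ w : V, w ∈ ε e → w ∈ ε f →
      (MGLineGraph ε).Adj e f := fun e f hne w hwe hwf =>
    (SimpleGraph.fromRel_adj _ e f).2 ⟨hne, Or.inl ⟨w, hwe, hwf⟩⟩
  have adj_dest : ∀ e f : E, (MGLineGraph ε).Adj e f →
      e ≠ f ∧ ∃ w, w ∈ ε e ∧ w ∈ ε f := by
    intro e f h
    rw [MGLineGraph, SimpleGraph.fromRel_adj] at h
    obtain ⟨hne, h | h⟩ := h
    · exact ⟨hne, h⟩
    · obtain ⟨w, h1, h2⟩ := h; exact ⟨hne, w, h2, h1⟩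
  constructor
  · -- (i)
    rintro ⟨S, hSind, A, B, hA, hB, hAB, hABc, hnoadj⟩
    set VB : Set V := {v | ∃ e ∈ B, v ∈ ε e} with hVBdef
    have key : ∀ v u e, v ∉ VB → u ∈ VB → ε e = s(v, u) → e ∈ S := by
      intro v u e hv hu he
      have hve : v ∈ ε e := by rw [he]; exact Sym2.mem_mk_left _ _
      have hue : u ∈ ε e := by rw [he]; exact Sym2.mem_mk_right _ _
      have heB : e ∉ B := fun h => hv ⟨e, h, hve⟩
      have heA : e ∉ A := by
        intro h
        obtain ⟨f, hfB, huf⟩ := hu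
        exact hnoadj e h f hfB (adj_of e f
          (fun hef => Set.disjoint_left.1 hAB h (hef ▸ hfB)) u hue huf)
      by_contra heS
      have : e ∈ Sᶜ := heS
      rw [← hABc] at this
      exact this.elim heA heB
    refine ⟨VBᶜ, VB, ?_, ?_, disjoint_compl_left, Set.compl_union_self _, ?_, ?_⟩
    · -- VBᶜ nonempty
      obtain ⟨e, heA⟩ := hA
      obtain ⟨x, y, hxy⟩ := sym2_rep (ε e)
      refine ⟨x, ?_⟩
      rintro ⟨f, hfB, hxf⟩
      exact hnoadj e heA f hfB (adj_of e f
        (fun hef => Set.disjoint_left.1 hAB heA (hef ▸ hfB)) x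
        (by rw [hxy]; exact Sym2.mem_mk_left _ _) hxf)
    · -- VB nonempty
      obtain ⟨e, heB⟩ := hB
      obtain ⟨x, y, hxy⟩ := sym2_rep (ε e)
      exact ⟨x, e, heB, by rw [hxy]; exact Sym2.mem_mk_left _ _⟩
    · -- matching condition on side VBᶜ
      intro v hv e₁ h₁ e₂ h₂
      obtain ⟨u₁, hu₁, he₁⟩ := h₁
      obtain ⟨u₂, hu₂, he₂⟩ := h₂
      by_contra hne
      have hS₁ : e₁ ∈ S := key v u₁ e₁ hv hu₁ he₁
      have hS₂ : e₂ ∈ S := key v u₂ e₂ hv hu₂ he₂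
      exact hSind e₁ hS₁ e₂ hS₂ (adj_of e₁ e₂ hne v
        (by rw [he₁]; exact Sym2.mem_mk_left _ _)
        (by rw [he₂]; exact Sym2.mem_mk_left _ _))
    · -- matching condition on side VB
      intro v hv e₁ h₁ e₂ h₂
      obtain ⟨u₁, hu₁, he₁⟩ := h₁
      obtain ⟨u₂, hu₂, he₂⟩ := h₂
      by_contra hne
      have hS₁ : e₁ ∈ S := key u₁ v e₁ hu₁ hv (he₁.trans (Sym2.eq_swap))
      have hS₂ : e₂ ∈ S := key u₂ v e₂ hu₂ hv (he₂.trans (Sym2.eq_swap))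
      exact hSind e₁ hS₁ e₂ hS₂ (adj_of e₁ e₂ hne v
        (by rw [he₁]; exact Sym2.mem_mk_left _ _)
        (by rw [he₂]; exact Sym2.mem_mk_left _ _))
  · -- (ii)
    rintro ⟨⟨A, B, hA, hB, hAB, hABu, hmA, hmB⟩, hdeg⟩
    have memAB : ∀ v : V, v ∈ A ∨ v ∈ B := by
      intro v
      have : v ∈ A ∪ B := by rw [hABu]; exact Set.mem_univ v
      exact this
    have notB : ∀ v ∈ A, v ∉ B := fun v hv => Set.disjoint_left.1 hAB hv
    set S : Set E := {e | ∃ a ∈ A, ∃ b ∈ B, ε e = s(a, b)} with hSdef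
    have structA : ∀ e ∈ S, ∀ w, w ∈ ε e → w ∈ A → ∃ b ∈ B, ε e = s(w, b) := by
      rintro e ⟨a, ha, b, hb, he⟩ w hw hwA
      rw [he, Sym2.mem_iff] at hw
      rcases hw with rfl | rfl
      · exact ⟨b, hb, he⟩
      · exact absurd hb (notB w hwA)
    have structB : ∀ e ∈ S, ∀ w, w ∈ ε e → w ∈ B → ∃ a ∈ A, ε e = s(w, a) := by
      rintro e ⟨a, ha, b, hb, he⟩ w hw hwB
      rw [he, Sym2.mem_iff] at hw
      rcases hw with rfl | rfl
      · exact absurd hwB (notB w ha)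
      · exact ⟨a, ha, he.trans Sym2.eq_swap⟩
    -- picking an internal edge at each vertex
    have pickA : ∀ v ∈ A, ∃ e, v ∈ ε e ∧ ∀ w ∈ ε e, w ∈ A := by
      intro v hv
      have hsub := hmA v hv
      have hcard : {e : E | ∃ u ∈ B, ε e = s(v, u)}.ncard ≤ 1 :=
        (Set.ncard_le_one (Set.toFinite _)).2 fun a ha b hb => hsub ha hb
      have : ∃ e, v ∈ ε e ∧ e ∉ {e : E | ∃ u ∈ B, ε e = s(v, u)} := by
        by_contra hcon
        push_neg at hcon
        have hss : {e : E | v ∈ ε e} ⊆ {e : E | ∃ u ∈ B, ε e = s(v, u)} :=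
          fun e he => hcon e he
        have := (hdeg v).trans (Set.ncard_le_ncard hss (Set.toFinite _))
        omega
      obtain ⟨e, hve, hcross⟩ := this
      obtain ⟨x, y, hxy⟩ := sym2_rep (ε e)
      have hvxy : v = x ∨ v = y := by rwa [hxy, Sym2.mem_iff] at hve
      have hrep : ∃ u, ε e = s(v, u) := by
        rcases hvxy with rfl | rfl
        · exact ⟨y, hxy⟩
        · exact ⟨x, hxy.trans Sym2.eq_swap⟩
      obtain ⟨u, hu⟩ := hrep
      have huA : u ∈ A := (memAB u).resolve_right fun huB => hcross ⟨u, huB, hu⟩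
      refine ⟨e, hve, fun w hw => ?_⟩
      rw [hu, Sym2.mem_iff] at hw
      rcases hw with rfl | rfl
      · exact hv
      · exact huA
    have pickB : ∀ v ∈ B, ∃ e, v ∈ ε e ∧ ∀ w ∈ ε e, w ∈ B := by
      intro v hv
      have hsub := hmB v hv
      have hcard : {e : E | ∃ u ∈ A, ε e = s(v, u)}.ncard ≤ 1 :=
        (Set.ncard_le_one (Set.toFinite _)).2 fun a ha b hb => hsub ha hb
      have : ∃ e, v ∈ ε e ∧ e ∉ {e : E | ∃ u ∈ A, ε e = s(v, u)} := by
        by_contra hcon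
        push_neg at hcon
        have hss : {e : E | v ∈ ε e} ⊆ {e : E | ∃ u ∈ A, ε e = s(v, u)} :=
          fun e he => hcon e he
        have := (hdeg v).trans (Set.ncard_le_ncard hss (Set.toFinite _))
        omega
      obtain ⟨e, hve, hcross⟩ := this
      obtain ⟨x, y, hxy⟩ := sym2_rep (ε e)
      have hvxy : v = x ∨ v = y := by rwa [hxy, Sym2.mem_iff] at hve
      have hrep : ∃ u, ε e = s(v, u) := by
        rcases hvxy with rfl | rfl
        · exact ⟨y, hxy⟩
        · exact ⟨x, hxy.trans Sym2.eq_swap⟩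
      obtain ⟨u, hu⟩ := hrep
      have huB : u ∈ B := (memAB u).resolve_left fun huA => hcross ⟨u, huA, hu⟩
      refine ⟨e, hve, fun w hw => ?_⟩
      rw [hu, Sym2.mem_iff] at hw
      rcases hw with rfl | rfl
      · exact hv
      · exact huB
    refine ⟨S, ?_, {e : E | ∀ w ∈ ε e, w ∈ A}, {e : E | ∀ w ∈ ε e, w ∈ B},
      ?_, ?_, ?_, ?_, ?_⟩
    · -- S independent
      intro e he f hf hadj
      obtain ⟨hne, w, hwe, hwf⟩ := adj_dest e f hadj
      rcases memAB w with hwA | hwB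
      · obtain ⟨b₁, hb₁, he₁⟩ := structA e he w hwe hwA
        obtain ⟨b₂, hb₂, hf₁⟩ := structA f hf w hwf hwA
        exact hne (hmA w hwA ⟨b₁, hb₁, he₁⟩ ⟨b₂, hb₂, hf₁⟩)
      · obtain ⟨a₁, ha₁, he₁⟩ := structB e he w hwe hwB
        obtain ⟨a₂, ha₂, hf₁⟩ := structB f hf w hwf hwB
        exact hne (hmB w hwB ⟨a₁, ha₁, he₁⟩ ⟨a₂, ha₂, hf₁⟩)
    · -- A' nonempty
      obtain ⟨v, hv⟩ := hA
      obtain ⟨e, _, he⟩ := pickA v hv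
      exact ⟨e, he⟩
    · -- B' nonempty
      obtain ⟨v, hv⟩ := hB
      obtain ⟨e, _, he⟩ := pickB v hv
      exact ⟨e, he⟩
    · -- disjoint
      rw [Set.disjoint_left]
      intro e h1 h2
      obtain ⟨x, y, hxy⟩ := sym2_rep (ε e)
      have hx : x ∈ ε e := by rw [hxy]; exact Sym2.mem_mk_left _ _
      exact notB x (h1 x hx) (h2 x hx)
    · -- union = Sᶜ
      ext e
      obtain ⟨x, y, hxy⟩ := sym2_rep (ε e)
      have hx : x ∈ ε e := by rw [hxy]; exact Sym2.mem_mk_left _ _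
      have hy : y ∈ ε e := by rw [hxy]; exact Sym2.mem_mk_right _ _
      constructor
      · rintro (h | h) heS
        · obtain ⟨a, ha, b, hb, he⟩ := heS
          have hb' : b ∈ ε e := by rw [he]; exact Sym2.mem_mk_right _ _
          exact notB b (h b hb') hb
        · obtain ⟨a, ha, b, hb, he⟩ := heS
          have ha' : a ∈ ε e := by rw [he]; exact Sym2.mem_mk_left _ _
          exact notB a ha (h a ha')
      · intro heS
        rcases memAB x with hxA | hxB <;> rcases memAB y with hyA | hyB
        · refine Or.inl fun w hw => ?_
          rw [hxy, Sym2.mem_iff] at hw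
          rcases hw with rfl | rfl
          · exact hxA
          · exact hyA
        · exact absurd ⟨x, hxA, y, hyB, hxy⟩ heS
        · exact absurd ⟨y, hyA, x, hxB, hxy.trans Sym2.eq_swap⟩ heS
        · refine Or.inr fun w hw => ?_
          rw [hxy, Sym2.mem_iff] at hw
          rcases hw with rfl | rfl
          · exact hxB
          · exact hyB
    · -- no edges between A' and B'
      intro e he f hf hadj
      obtain ⟨hne, w, hwe, hwf⟩ := adj_dest e f hadj
      exact notB w (he w hwe) (hf w hwf)
end
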